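/- arXiv:1301.2892 — 6 statements merged into one kernel-verified Lean document; each statement's English description precedes it below -/
import Mathlib

section
/- Every endomorphism Ψ of the group G = ℤ^m × F_n (m ≥ 1, n ≥ 1) is of the following form: there exist an m×m integer matrix Q and an n×m integer matrix P such that for all (a,u) ∈ G, Ψ(a,u) = (aQ + ūP, σ(a,u)), where the second coordinate σ(a,u) is given by either (i) σ(a,u) = φ(u) for some (fixed) endomorphism φ of F_n, or (ii) σ(a,u) = w^{a·lᵀ + ū·hᵀ} for some (fixed) element w ∈ F_n with w ≠ 1 and w not a proper power, some l ∈ ℤ^m with l ≠ 0, and some h ∈ ℤ^n. -/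
open Matrix

/-- The abelianization vector (vector of exponent sums of the generators)
of an element of the free group `F_n`. -/
def abVec {n : ℕ} (u : FreeGroup (Fin n)) : Fin n → ℤ :=
  Multiplicative.toAdd ((FreeGroup.lift fun i => Multiplicative.ofAdd (Pi.single i (1 : ℤ))) u)

/-- The free-abelian times free group `G = ℤ^m × F_n`. -/
abbrev GFab (m n : ℕ) := Multiplicative (Fin m → ℤ) × FreeGroup (Fin n)

set_option linter.unusedVariables false
set_option linter.unusedSectionVars false

namespace AuxFG

open FreeGroup

section FG
variable {α : Type*} [DecidableEq α]

/-- consing a non-cancelling letter to a reduced word stays reduced -/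
lemma reduce_cons_of_ne {M : List (α × Bool)} (hM : reduce M = M) (y : α × Bool)
    (hy : ∀ z ∈ M.head?, ¬(y.1 = z.1 ∧ y.2 = !z.2)) : reduce (y :: M) = y :: M := by
  rw [reduce.cons, hM]
  cases M with
  | nil => rfl
  | cons z t =>
    simp only [List.head?_cons, Option.mem_some_iff, forall_eq] at hy
    exact if_neg (hy z rfl)

/-- tail of a reduced word is reduced -/
lemma reduce_tail {M : List (α × Bool)} (hM : reduce M = M) : reduce M.tail = M.tail := by
  cases M with
  | nil => rfl
  | cons z t =>
    rw [reduce.cons] at hM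
    rcases hr : reduce t with _ | ⟨hd, tl⟩
    · rw [hr] at hM
      dsimp only [] at hM
      have ht : t = [] := by
        injection hM with _ h2
        exact h2.symm
      simp only [List.tail_cons, ht, reduce_nil]
    · rw [hr] at hM
      dsimp only [] at hM
      by_cases hc : z.1 = hd.1 ∧ z.2 = !hd.2
      · rw [if_pos hc] at hM
        exfalso
        have h1 : (reduce t).length ≤ t.length := (Red.length_le reduce.red)
        rw [hr] at h1
        have := congrArg List.length hM
        simp at this h1
        omega
      · rw [if_neg hc] at hM
        have ht : t = hd :: tl := by injection hM with _ h2; exact h2.symm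
        rw [List.tail_cons, ht, ← hr, reduce.idem, hr]

lemma reduce_cons_cancel (x : α) (b : Bool) {M : List (α × Bool)} (hM : reduce M = M) :
    reduce ((x, !b) :: (x, b) :: M) = M := by
  rw [reduce.Step.eq Red.Step.cons_not_rev, hM]


lemma invRev_cons (y : α × Bool) (M : List (α × Bool)) :
    invRev (y :: M) = invRev M ++ [(y.1, !y.2)] := by
  simp [invRev]

/-- main combinatorial lemma: anything commuting with a generator is a power of it. -/
lemma commute_of_gen : ∀ (N : ℕ) (w : FreeGroup α) (a : α), w.toWord.length ≤ N →
    Commute w (FreeGroup.of a) → ∃ k : ℤ, w = FreeGroup.of a ^ k := by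
  intro N
  induction N with
  | zero =>
    intro w a hw _
    refine ⟨0, ?_⟩
    rw [zpow_zero]
    exact toWord_eq_nil_iff.mp (List.eq_nil_of_length_eq_zero (Nat.le_zero.mp hw))
  | succ N ih =>
    intro w a hw hc
    rcases hL : w.toWord with _ | ⟨⟨x, s⟩, L'⟩
    · exact ⟨0, by rw [zpow_zero]; exact toWord_eq_nil_iff.mp hL⟩
    have hwred : reduce w.toWord = w.toWord := reduce_toWord w
    by_cases hxa : x = a
    · subst hxa
      -- strip the leading letter
      have hL'red : reduce L' = L' := by
        have := reduce_tail hwred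
        rwa [hL] at this
      cases s with
      | true =>
        set v := (FreeGroup.of x)⁻¹ * w with hv
        have hvw : v.toWord = L' := by
          have : v = FreeGroup.mk ((x, false) :: (x, true) :: L') := by
            rw [hv, ← mk_toWord (x := w), hL]
            rw [show (FreeGroup.of x)⁻¹ = FreeGroup.mk [(x, false)] by
              rw [FreeGroup.of, inv_mk]; rfl]
            rw [mul_mk]
            rfl
          rw [this, toWord_mk]
          simpa using reduce_cons_cancel x true hL'red
        have hcv : Commute v (FreeGroup.of x) :=
          ((Commute.refl (FreeGroup.of x)).inv_left).mul_left hc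
        obtain ⟨k, hk⟩ := ih v x (by rw [hvw]; have := hw; rw [hL] at this; simpa using this) hcv
        refine ⟨k + 1, ?_⟩
        have : w = FreeGroup.of x * v := by rw [hv]; group
        rw [this, hk]; group
      | false =>
        set v := FreeGroup.of x * w with hv
        have hvw : v.toWord = L' := by
          have : v = FreeGroup.mk ((x, true) :: (x, false) :: L') := by
            rw [hv, ← mk_toWord (x := w), hL]
            rw [show FreeGroup.of x = FreeGroup.mk [(x, true)] from rfl]
            rw [mul_mk]
            rfl
          rw [this, toWord_mk]
          simpa using reduce_cons_cancel x false hL'red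
        have hcv : Commute v (FreeGroup.of x) := (Commute.refl (FreeGroup.of x)).mul_left hc
        obtain ⟨k, hk⟩ := ih v x (by rw [hvw]; have := hw; rw [hL] at this; simpa using this) hcv
        refine ⟨k - 1, ?_⟩
        have : w = (FreeGroup.of x)⁻¹ * v := by rw [hv]; group
        rw [this, hk]; group
    · -- contradiction case
      exfalso
      have h1 : (FreeGroup.of a * w).toWord = (a, true) :: w.toWord := by
        have : FreeGroup.of a * w = FreeGroup.mk ((a, true) :: w.toWord) := by
          rw [← mk_toWord (x := w), show FreeGroup.of a = FreeGroup.mk [(a, true)] from rfl,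
            mul_mk, mk_toWord]
          rfl
        rw [this, toWord_mk]
        apply reduce_cons_of_ne hwred
        intro z hz
        rw [hL] at hz
        simp only [List.head?_cons, Option.mem_some_iff] at hz
        subst hz
        simp only [not_and]
        intro h _
        exact hxa h.symm
      have hinvred : reduce (invRev w.toWord) = invRev w.toWord := by
        rw [reduce_invRev, hwred]
      have h2eq : (w * FreeGroup.of a)⁻¹ = FreeGroup.mk ((a, false) :: invRev w.toWord) := by
        rw [_root_.mul_inv_rev, show (FreeGroup.of a)⁻¹ = FreeGroup.mk [(a, false)] by
          rw [FreeGroup.of, inv_mk]; rfl, ← mk_toWord (x := w⁻¹), toWord_inv, mul_mk]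
        rfl
      have hcomm : w * FreeGroup.of a = FreeGroup.of a * w := hc
      by_cases hh : (invRev w.toWord).head? = some (a, true)
      · -- cancellation at junction: length contradiction
        rcases hM : invRev w.toWord with _ | ⟨z, M⟩
        · rw [hM] at hh; simp at hh
        rw [hM] at hh
        simp only [List.head?_cons, Option.some.injEq] at hh
        subst hh
        have hMred : reduce M = M := by
          have := reduce_tail hinvred
          rwa [hM] at this
        have h3 : (w * FreeGroup.of a)⁻¹.toWord = M := by
          rw [h2eq, hM, toWord_mk]
          simpa using reduce_cons_cancel a true hMred
        have h4 : (w * FreeGroup.of a).toWord = invRev M := by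
          rw [show w * FreeGroup.of a = ((w * FreeGroup.of a)⁻¹)⁻¹ by group, toWord_inv, h3]
        have hlen := congrArg List.length h4
        rw [hcomm, h1, invRev_length] at hlen
        have hlenM : M.length + 1 = w.toWord.length := by
          have := congrArg List.length hM
          rw [invRev_length] at this
          simpa using this.symm
        simp at hlen
        omega
      · have h3 : (w * FreeGroup.of a)⁻¹.toWord = (a, false) :: invRev w.toWord := by
          rw [h2eq, toWord_mk]
          apply reduce_cons_of_ne hinvred
          intro z hz
          simp only [not_and]
          intro hz1 hz2
          apply hh
          have hz2' : z.2 = true := by simpa using hz2.symm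
          have hzz : z = (a, true) := Prod.ext hz1.symm hz2'
          rw [Option.mem_def] at hz
          rw [hz, hzz]
        have h4 : (w * FreeGroup.of a).toWord = w.toWord ++ [(a, true)] := by
          rw [show w * FreeGroup.of a = ((w * FreeGroup.of a)⁻¹)⁻¹ by group, toWord_inv, h3,
            invRev_cons, invRev_invRev]
          rfl
        rw [hcomm, h1] at h4
        -- (a,true) :: w.toWord = w.toWord ++ [(a,true)], compare heads
        have hhead := congrArg List.head? h4
        rw [hL] at hhead
        simp at hhead
        exact hxa hhead.1.symm

/-- exponent-sum homomorphism with respect to one generator. -/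
def expSum (a : α) : FreeGroup α →* Multiplicative ℤ :=
  FreeGroup.lift (fun x => Multiplicative.ofAdd (if x = a then 1 else 0))

lemma expSum_of_self (a : α) : expSum a (FreeGroup.of a) = Multiplicative.ofAdd 1 := by
  simp [expSum]

lemma expSum_of_ne {a b : α} (hb : b ≠ a) : expSum a (FreeGroup.of b) = 1 := by
  simp [expSum, hb]

lemma of_zpow_injective (a : α) {i j : ℤ} (h : FreeGroup.of a ^ i = FreeGroup.of a ^ j) :
    i = j := by
  have := congrArg (expSum a) h
  rw [map_zpow, map_zpow, expSum_of_self] at this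
  have := congrArg Multiplicative.toAdd this
  simpa using this

lemma eq_one_of_commute_all {a b : α} (hab : a ≠ b) (z : FreeGroup α)
    (hz : ∀ x, Commute z x) : z = 1 := by
  obtain ⟨i, hi⟩ := commute_of_gen z.toWord.length z a le_rfl (hz (FreeGroup.of a))
  obtain ⟨j, hj⟩ := commute_of_gen z.toWord.length z b le_rfl (hz (FreeGroup.of b))
  have h1 : expSum a z = Multiplicative.ofAdd i := by
    rw [hi, map_zpow, expSum_of_self, ← ofAdd_zsmul, smul_eq_mul, mul_one]
  have h2 : expSum a z = 1 := by
    rw [hj, map_zpow, expSum_of_ne hab.symm, _root_.one_zpow]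
  rw [h2] at h1
  have : i = 0 := by
    have := congrArg Multiplicative.toAdd h1.symm
    simpa using this
  rw [hi, this, zpow_zero]

lemma subsingleton_zpow {β : Type*} [Subsingleton β] (s₀ : β) (x : FreeGroup β) :
    ∃ k : ℤ, x = FreeGroup.of s₀ ^ k := by
  induction x using FreeGroup.induction_on with
  | C1 => exact ⟨0, by rw [zpow_zero]⟩
  | of y => exact ⟨1, by rw [zpow_one, Subsingleton.elim y s₀]⟩
  | inv_of y _ =>
    exact ⟨-1, by rw [_root_.zpow_neg, zpow_one, Subsingleton.elim y s₀]⟩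
  | mul y z hy hz =>
    obtain ⟨ky, hky⟩ := hy
    obtain ⟨kz, hkz⟩ := hz
    exact ⟨ky + kz, by rw [hky, hkz, _root_.zpow_add]⟩


end FG

theorem exists_root {β : Type*} (g : FreeGroup β) (hg : g ≠ 1) :
    ∃ w : FreeGroup β, w ≠ 1 ∧ (¬∃ (z : FreeGroup β) (k : ℕ), 2 ≤ k ∧ w = z ^ k) ∧
      (∀ i j : ℤ, w ^ i = w ^ j → i = j) ∧
      ∀ x : FreeGroup β, Commute g x → ∃ k : ℤ, x = w ^ k := by
  classical
  set H : Subgroup (FreeGroup β) := Subgroup.centralizer {g} with hH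
  have hmemH : ∀ x : FreeGroup β, Commute g x → x ∈ H := by
    intro x hx
    rw [hH, Subgroup.mem_centralizer_iff]
    rintro h rfl
    exact hx
  have hgH : g ∈ H := hmemH g (Commute.refl g)
  set S := IsFreeGroup.Generators H with hS
  set e : H ≃* FreeGroup S := IsFreeGroup.toFreeGroup (G := H) with he
  set g' : H := ⟨g, hgH⟩ with hg'
  have hcent : ∀ y : H, Commute g' y := by
    intro y
    have h2 := Subgroup.mem_centralizer_iff.mp y.2 g rfl
    exact Subtype.ext h2
  set z : FreeGroup S := e g' with hz
  have hz1 : z ≠ 1 := by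
    simp only [hz, ne_eq, EmbeddingLike.map_eq_one_iff]
    intro h
    exact hg (by simpa [hg'] using congrArg Subtype.val h)
  have hzc : ∀ x : FreeGroup S, Commute z x := by
    intro x
    have h1 := (hcent (e.symm x)).map e.toMonoidHom
    simpa [hz] using h1
  have hsub : Subsingleton S := by
    constructor
    intro a b
    by_contra hab
    exact hz1 (eq_one_of_commute_all hab z hzc)
  have hne : Nonempty S := by
    by_contra hne
    have : IsEmpty S := not_nonempty_iff.mp hne
    apply hz1
    induction z using FreeGroup.induction_on with
    | C1 => rfl
    | of x => exact this.elim x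
    | inv_of x _ => exact this.elim x
    | mul x y hx hy => rw [hx, hy, one_mul]
  obtain ⟨s₀⟩ := hne
  set c : H := e.symm (FreeGroup.of s₀) with hc
  have hec : e c = FreeGroup.of s₀ := by rw [hc, MulEquiv.apply_symm_apply]
  have hmemPow : ∀ y : H, ∃ k : ℤ, y = c ^ k := by
    intro y
    obtain ⟨k, hk⟩ := subsingleton_zpow s₀ (e y)
    exact ⟨k, e.injective (by rw [map_zpow, hec, hk])⟩
  refine ⟨(c : FreeGroup β), ?_, ?_, ?_, ?_⟩
  · intro hw
    have : c = 1 := by exact_mod_cast OneMemClass.coe_eq_one.mp hw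
    rw [this, _root_.map_one] at hec
    exact FreeGroup.of_ne_one s₀ hec.symm
  · -- not a proper power
    rintro ⟨zz, k, hk2, hzk⟩
    have hinj : ∀ i j : ℤ, (c : FreeGroup β) ^ i = (c : FreeGroup β) ^ j → i = j := by
      intro i j hij
      rw [← SubgroupClass.coe_zpow, ← SubgroupClass.coe_zpow] at hij
      have := congrArg e (Subtype.ext hij : c ^ i = c ^ j)
      rw [map_zpow, map_zpow, hec] at this
      exact of_zpow_injective s₀ this
    have hcz : Commute zz (c : FreeGroup β) := by
      rw [hzk]; exact (Commute.refl zz).pow_right k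
    obtain ⟨j, hj⟩ := hmemPow g'
    have hgw : g = (c : FreeGroup β) ^ j := by
      rw [← SubgroupClass.coe_zpow, ← hj]
    have hczg : Commute g zz := by
      rw [hgw]
      exact ((hcz.zpow_right j)).symm
    obtain ⟨t, ht⟩ := hmemPow ⟨zz, hmemH zz hczg⟩
    have hzzw : zz = (c : FreeGroup β) ^ t := by
      rw [← SubgroupClass.coe_zpow, ← ht]
    have h1 : (c : FreeGroup β) ^ (1 : ℤ) = (c : FreeGroup β) ^ (t * k) := by
      rw [zpow_one, _root_.zpow_mul, ← hzzw, zpow_natCast, ← hzk]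
    have h2 : (1 : ℤ) = t * k := hinj _ _ h1
    have h3 : (k : ℤ) ∣ 1 := Dvd.intro_left t h2.symm
    have h4 : (k : ℤ) ≤ 1 := Int.le_of_dvd one_pos h3
    omega
  · intro i j hij
    rw [← SubgroupClass.coe_zpow, ← SubgroupClass.coe_zpow] at hij
    have := congrArg e (Subtype.ext hij : c ^ i = c ^ j)
    rw [map_zpow, map_zpow, hec] at this
    exact of_zpow_injective s₀ this
  · intro x hx
    obtain ⟨k, hk⟩ := hmemPow ⟨x, hmemH x hx⟩
    exact ⟨k, by rw [← SubgroupClass.coe_zpow, ← hk]⟩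


/-- the abelianization homomorphism -/
def abHom (n : ℕ) : FreeGroup (Fin n) →* Multiplicative (Fin n → ℤ) :=
  FreeGroup.lift fun i => Multiplicative.ofAdd (Pi.single i (1 : ℤ))

lemma abVec_eq (n : ℕ) (u : FreeGroup (Fin n)) : abVec u = Multiplicative.toAdd (abHom n u) := rfl

lemma abHom_eq (n : ℕ) (u : FreeGroup (Fin n)) : abHom n u = Multiplicative.ofAdd (abVec u) := rfl

lemma abVec_of {n : ℕ} (j : Fin n) : abVec (FreeGroup.of j) = Pi.single j 1 := by
  simp [abVec, FreeGroup.lift_apply_of]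

lemma addHom_eq_sum {m : ℕ} {A : Type*} [AddCommGroup A] (f : (Fin m → ℤ) →+ A)
    (a : Fin m → ℤ) : f a = ∑ i, a i • f (Pi.single i 1) := by
  have ha : a = ∑ i, Pi.single i (a i) := (Finset.univ_sum_single a).symm
  conv_lhs => rw [ha]
  rw [map_sum]
  refine Finset.sum_congr rfl fun i _ => ?_
  have hs : Pi.single i (a i) = a i • (Pi.single i (1 : ℤ) : Fin m → ℤ) := by
    funext j
    simp [Pi.single_apply, mul_ite]
  rw [hs, map_zsmul]

/-- vecMul as an additive hom -/
def vecMulHom {m k : ℕ} (Q : Matrix (Fin m) (Fin k) ℤ) : (Fin m → ℤ) →+ (Fin k → ℤ) where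
  toFun a := a ᵥ* Q
  map_zero' := Matrix.zero_vecMul Q
  map_add' a b := Matrix.add_vecMul Q a b

lemma vecMul_single_one {m k : ℕ} (Q : Matrix (Fin m) (Fin k) ℤ) (i : Fin m) :
    Pi.single i (1 : ℤ) ᵥ* Q = Q i := by
  rw [Matrix.single_vecMul]
  funext j
  rw [one_smul]; rfl

lemma vecMul_eq_sum' {m k : ℕ} (a : Fin m → ℤ) (Q : Matrix (Fin m) (Fin k) ℤ) :
    a ᵥ* Q = ∑ i, a i • Q i := by
  have := addHom_eq_sum (vecMulHom Q) a
  simpa [vecMulHom, vecMul_single_one, Matrix.row_apply'] using this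

/-- any additive hom out of ℤ^m is a vecMul -/
lemma addHom_eq_vecMul {m k : ℕ} (f : (Fin m → ℤ) →+ (Fin k → ℤ)) (a : Fin m → ℤ) :
    f a = a ᵥ* Matrix.of (fun i => f (Pi.single i 1)) := by
  rw [addHom_eq_sum f a, vecMul_eq_sum']
  rfl

lemma addHom_eq_dotProduct {m : ℕ} (f : (Fin m → ℤ) →+ ℤ) (a : Fin m → ℤ) :
    f a = a ⬝ᵥ (fun i => f (Pi.single i 1)) := by
  rw [addHom_eq_sum f a]
  simp [dotProduct, smul_eq_mul]

/-- dotProduct as an additive hom -/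
def dotHom {k : ℕ} (h : Fin k → ℤ) : (Fin k → ℤ) →+ ℤ where
  toFun v := v ⬝ᵥ h
  map_zero' := zero_dotProduct h
  map_add' a b := add_dotProduct a b h


end AuxFG

open AuxFG in
/-- Every endomorphism of `ℤ^m × F_n` (m ≥ 1, n ≥ 1) is given by
`(a,u) ↦ (aQ + ūP, σ(a,u))` where σ is either (i) of the form `φ(u)` for an endomorphism
φ of `F_n`, or (ii) of the form `w^(a·lᵀ + ū·hᵀ)` with `w ≠ 1` not a proper power and
`l ≠ 0`. -/
theorem classification_of_endomorphisms (m n : ℕ) (hm : 1 ≤ m) (hn : 1 ≤ n)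
    (Ψ : GFab m n →* GFab m n) :
    ∃ (Q : Matrix (Fin m) (Fin m) ℤ) (P : Matrix (Fin n) (Fin m) ℤ),
      (∃ φ : FreeGroup (Fin n) →* FreeGroup (Fin n),
        ∀ (a : Fin m → ℤ) (u : FreeGroup (Fin n)),
          Ψ (Multiplicative.ofAdd a, u)
            = (Multiplicative.ofAdd (a ᵥ* Q + abVec u ᵥ* P), φ u)) ∨
      (∃ (w : FreeGroup (Fin n)) (l : Fin m → ℤ) (h : Fin n → ℤ),
        w ≠ 1 ∧ (¬ ∃ (z : FreeGroup (Fin n)) (k : ℕ), 2 ≤ k ∧ w = z ^ k) ∧ l ≠ 0 ∧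
        ∀ (a : Fin m → ℤ) (u : FreeGroup (Fin n)),
          Ψ (Multiplicative.ofAdd a, u)
            = (Multiplicative.ofAdd (a ᵥ* Q + abVec u ᵥ* P),
                w ^ (a ⬝ᵥ l + abVec u ⬝ᵥ h))) := by
  classical
  set Ψ₁ : GFab m n →* Multiplicative (Fin m → ℤ) := (MonoidHom.fst _ _).comp Ψ with hΨ₁
  set Ψ₂ : GFab m n →* FreeGroup (Fin n) := (MonoidHom.snd _ _).comp Ψ with hΨ₂
  have hsplit : ∀ x : GFab m n, Ψ x = (Ψ₁ x, Ψ₂ x) := fun x => rfl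
  have hdec : ∀ (a : Fin m → ℤ) (u : FreeGroup (Fin n)),
      ((Multiplicative.ofAdd a, u) : GFab m n)
        = (Multiplicative.ofAdd a, 1) * (1, u) := by
    intro a u
    rw [Prod.mk_mul_mk, mul_one, one_mul]
  -- the matrices
  set Q : Matrix (Fin m) (Fin m) ℤ :=
    Matrix.of (fun i => Multiplicative.toAdd (Ψ₁ (Multiplicative.ofAdd (Pi.single i 1), 1)))
    with hQ
  set P : Matrix (Fin n) (Fin m) ℤ :=
    Matrix.of (fun j => Multiplicative.toAdd (Ψ₁ (1, FreeGroup.of j))) with hP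
  -- the additive hom for the first factor
  set f1 : (Fin m → ℤ) →+ (Fin m → ℤ) :=
    { toFun := fun b => Multiplicative.toAdd (Ψ₁ (Multiplicative.ofAdd b, 1))
      map_zero' := by
        show Multiplicative.toAdd (Ψ₁ (Multiplicative.ofAdd (0 : Fin m → ℤ), 1)) = 0
        have : ((Multiplicative.ofAdd (0 : Fin m → ℤ), 1) : GFab m n) = 1 := by
          rw [ofAdd_zero]; rfl
        rw [this, _root_.map_one]; rfl
      map_add' := by
        intro b b'
        show Multiplicative.toAdd (Ψ₁ (Multiplicative.ofAdd (b + b'), 1))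
          = Multiplicative.toAdd (Ψ₁ (Multiplicative.ofAdd b, 1))
            + Multiplicative.toAdd (Ψ₁ (Multiplicative.ofAdd b', 1))
        have : ((Multiplicative.ofAdd (b + b'), 1) : GFab m n)
            = (Multiplicative.ofAdd b, 1) * (Multiplicative.ofAdd b', 1) := by
          rw [Prod.mk_mul_mk, mul_one, ← ofAdd_add]
        rw [this, _root_.map_mul, toAdd_mul] } with hf1
  have hA : ∀ a : Fin m → ℤ, Ψ₁ (Multiplicative.ofAdd a, 1) = Multiplicative.ofAdd (a ᵥ* Q) := by
    intro a
    have h1 := addHom_eq_vecMul f1 a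
    have h2 : Matrix.of (fun i => f1 (Pi.single i 1)) = Q := rfl
    rw [h2] at h1
    have := congrArg Multiplicative.ofAdd h1
    simpa [hf1] using this
  have hB : ∀ u : FreeGroup (Fin n),
      Ψ₁ (1, u) = Multiplicative.ofAdd (abVec u ᵥ* P) := by
    intro u
    set F1 : FreeGroup (Fin n) →* Multiplicative (Fin m → ℤ) :=
      Ψ₁.comp (MonoidHom.inr (Multiplicative (Fin m → ℤ)) (FreeGroup (Fin n))) with hF1
    set F2 : FreeGroup (Fin n) →* Multiplicative (Fin m → ℤ) :=
      (AddMonoidHom.toMultiplicative (vecMulHom P)).comp (abHom n) with hF2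
    have hFeq : F1 = F2 := by
      apply FreeGroup.ext_hom
      intro j
      rw [hF1, hF2]
      simp only [MonoidHom.comp_apply, MonoidHom.inr_apply]
      rw [show abHom n (FreeGroup.of j) = Multiplicative.ofAdd (abVec (FreeGroup.of j)) from rfl,
        abVec_of]
      show Ψ₁ (1, FreeGroup.of j) = Multiplicative.ofAdd ((Pi.single j 1 : Fin n → ℤ) ᵥ* P)
      rw [vecMul_single_one]
      show Ψ₁ (1, FreeGroup.of j) = Multiplicative.ofAdd (Multiplicative.toAdd (Ψ₁ (1, FreeGroup.of j)))
      rw [ofAdd_toAdd]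
    have := congrArg (fun F => F u) hFeq
    simp only [hF1, hF2, MonoidHom.comp_apply, MonoidHom.inr_apply] at this
    rw [this]
    show Multiplicative.ofAdd (Multiplicative.toAdd (abHom n u) ᵥ* P) = _
    rw [show Multiplicative.toAdd (abHom n u) = abVec u from rfl]
  have hfirst : ∀ (a : Fin m → ℤ) (u : FreeGroup (Fin n)),
      Ψ₁ (Multiplicative.ofAdd a, u) = Multiplicative.ofAdd (a ᵥ* Q + abVec u ᵥ* P) := by
    intro a u
    rw [hdec, _root_.map_mul, hA, hB, ← ofAdd_add]
  by_cases hcase : ∀ a : Fin m → ℤ, Ψ₂ (Multiplicative.ofAdd a, 1) = 1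
  · refine ⟨Q, P, Or.inl ⟨Ψ₂.comp (MonoidHom.inr (Multiplicative (Fin m → ℤ)) (FreeGroup (Fin n))), ?_⟩⟩
    intro a u
    rw [hsplit]
    refine Prod.ext (hfirst a u) ?_
    show Ψ₂ (Multiplicative.ofAdd a, u) = Ψ₂ (1, u)
    rw [hdec, _root_.map_mul, hcase a, one_mul]
  · push_neg at hcase
    obtain ⟨a₀, ha₀⟩ := hcase
    set g : FreeGroup (Fin n) := Ψ₂ (Multiplicative.ofAdd a₀, 1) with hg
    have hgcomm : ∀ x : GFab m n, Commute g (Ψ₂ x) := by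
      intro x
      have hc₀ : Commute ((Multiplicative.ofAdd a₀, 1) : GFab m n) x := by
        show _ * _ = _ * _
        refine Prod.ext ?_ ?_
        · exact mul_comm _ _
        · show 1 * x.2 = x.2 * 1
          rw [one_mul, mul_one]
      exact hc₀.map Ψ₂
    obtain ⟨w, hw1, hwnp, hwinj, hwpow⟩ := exists_root g ha₀
    have hex : ∀ x : GFab m n, ∃ k : ℤ, Ψ₂ x = w ^ k := by
      intro x
      obtain ⟨k, hk⟩ := hwpow (Ψ₂ x) (hgcomm x)
      exact ⟨k, hk⟩
    choose K hK using hex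
    have Kadd : ∀ x y : GFab m n, K (x * y) = K x + K y := by
      intro x y
      apply hwinj
      rw [← hK, _root_.map_mul, hK, hK, _root_.zpow_add]
    have K1 : K 1 = 0 := by
      have := Kadd 1 1
      rw [one_mul] at this
      omega
    set l : Fin m → ℤ := fun i => K (Multiplicative.ofAdd (Pi.single i 1), 1) with hl
    set hv : Fin n → ℤ := fun j => K (1, FreeGroup.of j) with hhv
    -- K on the first factor
    set f2 : (Fin m → ℤ) →+ ℤ :=
      { toFun := fun b => K (Multiplicative.ofAdd b, 1)
        map_zero' := by
          show K (Multiplicative.ofAdd (0 : Fin m → ℤ), 1) = 0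
          have : ((Multiplicative.ofAdd (0 : Fin m → ℤ), 1) : GFab m n) = 1 := by
            rw [ofAdd_zero]; rfl
          rw [this, K1]
        map_add' := by
          intro b b'
          show K (Multiplicative.ofAdd (b + b'), 1)
            = K (Multiplicative.ofAdd b, 1) + K (Multiplicative.ofAdd b', 1)
          have : ((Multiplicative.ofAdd (b + b'), 1) : GFab m n)
              = (Multiplicative.ofAdd b, 1) * (Multiplicative.ofAdd b', 1) := by
            rw [Prod.mk_mul_mk, mul_one, ← ofAdd_add]
          rw [this, Kadd] } with hf2
    have hKa : ∀ a : Fin m → ℤ, K (Multiplicative.ofAdd a, 1) = a ⬝ᵥ l := by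
      intro a
      have := addHom_eq_dotProduct f2 a
      simpa [hf2, hl] using this
    have hKu : ∀ u : FreeGroup (Fin n), K (1, u) = abVec u ⬝ᵥ hv := by
      intro u
      set F1 : FreeGroup (Fin n) →* Multiplicative ℤ :=
        { toFun := fun v => Multiplicative.ofAdd (K (1, v))
          map_one' := by
            show Multiplicative.ofAdd (K ((1 : Multiplicative (Fin m → ℤ)), (1 : FreeGroup (Fin n)))) = 1
            have : ((1, (1 : FreeGroup (Fin n))) : GFab m n) = 1 := rfl
            rw [this, K1]; rfl
          map_mul' := by
            intro v v'
            show Multiplicative.ofAdd (K ((1 : Multiplicative (Fin m → ℤ)), v * v'))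
              = Multiplicative.ofAdd (K (1, v)) * Multiplicative.ofAdd (K (1, v'))
            have : (((1 : Multiplicative (Fin m → ℤ)), v * v') : GFab m n)
                = (1, v) * (1, v') := by
              rw [Prod.mk_mul_mk, one_mul]
            rw [this, Kadd, ofAdd_add] } with hF1
      set F2 : FreeGroup (Fin n) →* Multiplicative ℤ :=
        (AddMonoidHom.toMultiplicative (dotHom hv)).comp (abHom n) with hF2
      have hFeq : F1 = F2 := by
        apply FreeGroup.ext_hom
        intro j
        rw [hF1, hF2]
        simp only [MonoidHom.comp_apply, MonoidHom.coe_mk, OneHom.coe_mk]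
        rw [show abHom n (FreeGroup.of j) = Multiplicative.ofAdd (abVec (FreeGroup.of j)) from rfl,
          abVec_of]
        show Multiplicative.ofAdd (K (1, FreeGroup.of j))
          = Multiplicative.ofAdd ((Pi.single j 1 : Fin n → ℤ) ⬝ᵥ hv)
        rw [single_dotProduct, one_mul]
      have := congrArg (fun F => F u) hFeq
      simp only [hF1, hF2, MonoidHom.comp_apply, MonoidHom.coe_mk, OneHom.coe_mk] at this
      have h2 : K (1, u) = Multiplicative.toAdd (AddMonoidHom.toMultiplicative (dotHom hv) (abHom n u)) := by
        rw [← this]; rfl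
      rw [h2]
      show Multiplicative.toAdd (Multiplicative.ofAdd (dotHom hv (Multiplicative.toAdd (abHom n u)))) = _
      rw [toAdd_ofAdd]
      rfl
    refine ⟨Q, P, Or.inr ⟨w, l, hv, hw1, hwnp, ?_, ?_⟩⟩
    · intro hl0
      apply ha₀
      show Ψ₂ (Multiplicative.ofAdd a₀, 1) = 1
      rw [hK (Multiplicative.ofAdd a₀, 1), hKa, hl0, dotProduct_zero, zpow_zero]
    · intro a u
      rw [hsplit]
      refine Prod.ext (hfirst a u) ?_
      show Ψ₂ (Multiplicative.ofAdd a, u) = _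
      rw [hK (Multiplicative.ofAdd a, u)]
      congr 1
      rw [hdec, Kadd, hKa, hKu]
end

section
/- Let m ≥ 1, n ≥ 2 and let Ψ be an endomorphism of G = ℤ^m × F_n. Then Ψ is injective if and only if there exist an injective endomorphism φ of F_n, an m×m integer matrix Q with det(Q) ≠ 0, and an n×m integer matrix P such that Ψ(a,u) = (aQ + ūP, φ(u)) for all (a,u) ∈ G. -/
open Matrix

namespace MonoAux

variable {α : Type*} [DecidableEq α]

/-- The no-cancellation relation on letters of free-group words. -/
def NC (p q : α × Bool) : Prop := ¬(p.1 = q.1 ∧ q.2 = !p.2)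

lemma chain'_reduce (L : List (α × Bool)) : List.IsChain NC (FreeGroup.reduce L) := by
  induction L with
  | nil => simp
  | cons hd tl ih =>
    rw [FreeGroup.reduce.cons]
    rcases h : FreeGroup.reduce tl with _ | ⟨hd2, tl2⟩
    · simp
    · rw [h] at ih
      by_cases hc : hd.1 = hd2.1 ∧ hd.2 = !hd2.2
      · simpa [hc] using ih.tail
      · simp only [hc, if_false]
        refine List.isChain_cons_cons.mpr ⟨?_, ih⟩
        rintro ⟨h1, h2⟩
        exact hc ⟨h1, by cases h2' : hd2.2 <;> simp_all⟩

lemma reduce_eq_self_of_chain' {L : List (α × Bool)} (h : List.IsChain NC L) :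
    FreeGroup.reduce L = L := by
  have hred : FreeGroup.Red L (FreeGroup.reduce L) := FreeGroup.reduce.red
  rcases Relation.ReflTransGen.cases_head hred with heq | ⟨L', hstep, _⟩
  · exact heq.symm
  · exfalso
    cases hstep with
    | @not L₁ L₂ x b =>
      have h2 := (List.isChain_append.mp h).2.1
      have := (List.isChain_cons_cons.mp h2).1
      exact this ⟨rfl, rfl⟩

lemma chain'_toWord (x : FreeGroup α) : List.IsChain NC x.toWord := by
  rw [← FreeGroup.reduce_toWord]; exact chain'_reduce _

lemma toWord_mul (x y : FreeGroup α) :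
    (x * y).toWord = FreeGroup.reduce (x.toWord ++ y.toWord) := by
  conv_lhs => rw [← FreeGroup.mk_toWord (x := x), ← FreeGroup.mk_toWord (x := y)]
  rw [FreeGroup.mul_mk, FreeGroup.toWord_mk]

/-- A free group with a nontrivial central element is commutative. -/
lemma commute_of_center {c : FreeGroup α} (hc : c ≠ 1)
    (hcen : ∀ x : FreeGroup α, c * x = x * c) (x y : FreeGroup α) : Commute x y := by
  have hL : c.toWord ≠ [] := fun h => hc (FreeGroup.toWord_eq_nil_iff.mp h)
  obtain ⟨p, L', hcons⟩ := List.exists_cons_of_ne_nil hL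
  have hsub : ∀ j : α, j = p.1 := by
    intro j
    by_contra hj
    set ℓ := c.toWord.getLast hL with hldef
    set b : Bool := if ℓ = (j, false) then false else true with hb
    set z : FreeGroup α := FreeGroup.mk [(j, b)] with hz
    have hzw : z.toWord = [(j, b)] := by
      rw [hz, FreeGroup.toWord_mk, FreeGroup.reduce_singleton]
    have h1 : (c * z).toWord = c.toWord ++ [(j, b)] := by
      rw [toWord_mul, hzw]
      apply reduce_eq_self_of_chain'
      refine List.IsChain.append (chain'_toWord c) (List.isChain_singleton _) ?_
      intro u hu v hv
      rw [List.getLast?_eq_getLast hL, Option.mem_some_iff] at hu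
      simp only [List.head?_cons, Option.mem_some_iff] at hv
      subst hu; subst hv
      rintro ⟨he1, he2⟩
      rw [← hldef] at he1 he2
      by_cases hif : ℓ = (j, false)
      · rw [hif] at he2
        simp [hb, hif] at he2
      · have hb1 : b = true := by rw [hb, if_neg hif]
        rw [hb1] at he2
        apply hif
        have : ℓ.2 = false := by cases h2 : ℓ.2 <;> simp_all
        exact Prod.ext he1 this
    have h2 : (z * c).toWord = (j, b) :: c.toWord := by
      rw [toWord_mul, hzw]
      apply reduce_eq_self_of_chain'
      rw [hcons]
      refine List.isChain_cons_cons.mpr ⟨?_, by rw [← hcons]; exact chain'_toWord c⟩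
      rintro ⟨he1, _⟩
      exact hj he1
    have heq : c.toWord ++ [(j, b)] = (j, b) :: c.toWord := by
      rw [← h1, ← h2, hcen z]
    rw [hcons] at heq
    simp only [List.cons_append, List.cons.injEq] at heq
    exact hj (congrArg Prod.fst heq.1).symm
  have hss : Subsingleton α := ⟨fun a b => (hsub a).trans (hsub b).symm⟩
  have key : ∀ (a : α) (w : FreeGroup α), Commute (FreeGroup.of a) w := by
    intro a w
    induction w using FreeGroup.induction_on with
    | C1 => exact Commute.one_right _
    | of b => rw [Subsingleton.elim a b]
    | inv_of b h => exact h.inv_right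
    | mul u v hu hv => exact hu.mul_right hv
  induction x using FreeGroup.induction_on with
  | C1 => exact Commute.one_left _
  | of a => exact key a y
  | inv_of a h => exact (key a y).inv_left
  | mul u v hu hv => exact hu.mul_left hv

/-- Distinct generators of a free group do not commute. -/
lemma of_not_commute {a b : α} (hab : a ≠ b) :
    ¬ Commute (FreeGroup.of a) (FreeGroup.of b) := by
  intro hE
  have h := congrArg FreeGroup.toWord hE
  rw [toWord_mul, toWord_mul, FreeGroup.toWord_of, FreeGroup.toWord_of,
    reduce_eq_self_of_chain' (by simp [NC, List.isChain_cons_cons, hab]),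
    reduce_eq_self_of_chain' (by simp [NC, List.isChain_cons_cons, Ne.symm hab])] at h
  simp only [List.cons_append, List.nil_append, List.cons.injEq, Prod.mk.injEq] at h
  exact hab h.1.1

/-- A group that is free (in the `IsFreeGroup` sense) with a nontrivial central
element is commutative. -/
lemma isFreeGroup_commute {G : Type*} [Group G] [IsFreeGroup G] {c : G} (hc : c ≠ 1)
    (hcen : ∀ x : G, c * x = x * c) (x y : G) : Commute x y := by
  classical
  set e : G ≃* FreeGroup (IsFreeGroup.Generators G) := IsFreeGroup.toFreeGroup G with he
  have hc' : e c ≠ 1 := fun h => hc (by simpa using e.injective (by simpa using h))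
  have hcen' : ∀ w : FreeGroup (IsFreeGroup.Generators G), e c * w = w * e c := by
    intro w
    have := hcen (e.symm w)
    calc e c * w = e (c * e.symm w) := by simp [_root_.map_mul]
    _ = e (e.symm w * c) := by rw [this]
    _ = w * e c := by simp [_root_.map_mul]
  have := commute_of_center hc' hcen' (e x) (e y)
  have h2 : e (x * y) = e (y * x) := by simpa [_root_.map_mul] using this.eq
  exact e.injective h2

lemma abVec_mul {n : ℕ} (u v : FreeGroup (Fin n)) : abVec (u * v) = abVec u + abVec v := by
  simp [abVec, _root_.map_mul]

lemma abVec_one {n : ℕ} : abVec (1 : FreeGroup (Fin n)) = 0 := by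
  simp [abVec]

lemma abVec_of {n : ℕ} (j : Fin n) : abVec (FreeGroup.of j) = Pi.single j 1 := by
  simp [abVec, FreeGroup.lift_apply_of]

lemma addHom_eq_vecMul {m : ℕ} (f : (Fin m → ℤ) →+ (Fin m → ℤ)) (a : Fin m → ℤ) :
    f a = a ᵥ* Matrix.of (fun i j => f (Pi.single i 1) j) := by
  conv_lhs => rw [← Finset.univ_sum_single a, map_sum]
  ext j
  rw [Finset.sum_apply]
  simp only [Matrix.vecMul, dotProduct, Matrix.of_apply]
  refine Finset.sum_congr rfl fun i _ => ?_
  have h1 : (Pi.single i (a i) : Fin m → ℤ) = a i • (Pi.single i (1 : ℤ) : Fin m → ℤ) := by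
    ext k
    by_cases hk : k = i
    · subst hk; simp
    · simp [Pi.single_apply, hk]
  rw [h1, map_zsmul]
  simp

lemma freeHom_eq_vecMul {n m : ℕ} (f : FreeGroup (Fin n) →* Multiplicative (Fin m → ℤ))
    (u : FreeGroup (Fin n)) :
    Multiplicative.toAdd (f u)
      = abVec u ᵥ* Matrix.of (fun j k => Multiplicative.toAdd (f (FreeGroup.of j)) k) := by
  set P : Matrix (Fin n) (Fin m) ℤ :=
    Matrix.of (fun j k => Multiplicative.toAdd (f (FreeGroup.of j)) k) with hP
  set g : FreeGroup (Fin n) →* Multiplicative (Fin m → ℤ) :=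
    MonoidHom.mk' (fun u => Multiplicative.ofAdd (abVec u ᵥ* P))
      (by intro u v; rw [abVec_mul, Matrix.add_vecMul, ofAdd_add]) with hg
  have : f = g := by
    apply FreeGroup.ext_hom
    intro j
    rw [hg]
    simp only [MonoidHom.mk'_apply, abVec_of, Matrix.single_one_vecMul]
    have : P.row j = Multiplicative.toAdd (f (FreeGroup.of j)) := rfl
    rw [this, ofAdd_toAdd]
  rw [this]
  simp [hg]

end MonoAux

/-- An endomorphism Ψ of `ℤ^m × F_n` (m ≥ 1, n ≥ 2) is injective iff it is of type I
with φ an injective endomorphism of `F_n` and `det Q ≠ 0`. -/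
theorem mono_characterization (m n : ℕ) (hm : 1 ≤ m) (hn : 2 ≤ n)
    (Ψ : GFab m n →* GFab m n) :
    Function.Injective Ψ ↔
    ∃ (φ : FreeGroup (Fin n) →* FreeGroup (Fin n))
      (Q : Matrix (Fin m) (Fin m) ℤ) (P : Matrix (Fin n) (Fin m) ℤ),
      Function.Injective φ ∧ Q.det ≠ 0 ∧
      ∀ (a : Fin m → ℤ) (u : FreeGroup (Fin n)),
        Ψ (Multiplicative.ofAdd a, u)
          = (Multiplicative.ofAdd (a ᵥ* Q + abVec u ᵥ* P), φ u) := by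
  constructor
  · intro hinj
    set π₁ : GFab m n →* Multiplicative (Fin m → ℤ) := (MonoidHom.fst _ _).comp Ψ with hπ₁
    set π₂ : GFab m n →* FreeGroup (Fin n) := (MonoidHom.snd _ _).comp Ψ with hπ₂
    set φ : FreeGroup (Fin n) →* FreeGroup (Fin n) := π₂.comp (MonoidHom.inr _ _) with hφ
    set i0 : Fin n := ⟨0, by omega⟩ with hi0
    set i1 : Fin n := ⟨1, by omega⟩ with hi1
    have hi01 : i0 ≠ i1 := by simp [hi0, hi1, Fin.ext_iff]
    have hofnc : ¬ Commute (FreeGroup.of i0) (FreeGroup.of i1) := MonoAux.of_not_commute hi01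
    have hcentral : ∀ t : Multiplicative (Fin m → ℤ), ∀ g : GFab m n,
        ((t, 1) : GFab m n) * g = g * (t, 1) := by
      intro t g
      have h1 : t * g.1 = g.1 * t := mul_comm _ _
      have h2 : (1 : FreeGroup (Fin n)) * g.2 = g.2 * 1 := by rw [one_mul, mul_one]
      exact Prod.ext h1 h2
    have hφinj : Function.Injective φ := by
      rw [injective_iff_map_eq_one]
      intro w hw
      have hpsi : Ψ (1, w) = ((π₁ (1, w), 1) : GFab m n) := by
        have h0 : Ψ (1, w) = (π₁ (1, w), π₂ (1, w)) := rfl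
        have h1 : π₂ ((1 : Multiplicative (Fin m → ℤ)), w) = φ w := rfl
        rw [h0, h1, hw]
      by_contra hw1
      have hwcen : ∀ v : FreeGroup (Fin n), w * v = v * w := by
        intro v
        have h1 : Ψ ((1, w) * (1, v)) = Ψ ((1, v) * (1, w)) := by
          rw [_root_.map_mul, _root_.map_mul, hpsi, hcentral _ (Ψ (1, v))]
        have h2 := congrArg Prod.snd (hinj h1)
        simpa using h2
      exact hofnc (MonoAux.commute_of_center hw1 hwcen _ _)
    have hc1 : ∀ a : Fin m → ℤ, π₂ (Multiplicative.ofAdd a, 1) = 1 := by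
      intro a
      by_contra hc
      set c := π₂ (Multiplicative.ofAdd a, 1) with hcdef
      have hcomm : ∀ u : FreeGroup (Fin n), c * φ u = φ u * c := by
        intro u
        have h0 : ((Multiplicative.ofAdd a, (1 : FreeGroup (Fin n))) : GFab m n) * (1, u)
            = ((1, u) : GFab m n) * (Multiplicative.ofAdd a, 1) :=
          Prod.ext (mul_comm _ _) ((one_mul u).trans (mul_one u).symm)
        have h2 := congrArg π₂ h0
        rw [_root_.map_mul, _root_.map_mul] at h2
        exact h2
      set K := Subgroup.centralizer ({c} : Set (FreeGroup (Fin n))) with hK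
      have hcK : c ∈ K := Subgroup.mem_centralizer_singleton_iff.mpr rfl
      have hφK : ∀ u, φ u ∈ K := fun u => Subgroup.mem_centralizer_singleton_iff.mpr (hcomm u).symm
      have hKab : ∀ x y : K, Commute x y := by
        apply MonoAux.isFreeGroup_commute (c := (⟨c, hcK⟩ : K))
        · intro h
          exact hc (congrArg Subtype.val h)
        · intro x
          exact Subtype.ext (Subgroup.mem_centralizer_singleton_iff.mp x.2).symm
      have h2 : Commute (φ (FreeGroup.of i0)) (φ (FreeGroup.of i1)) :=
        congrArg Subtype.val (hKab ⟨φ (FreeGroup.of i0), hφK _⟩ ⟨φ (FreeGroup.of i1), hφK _⟩)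
      have h3 : FreeGroup.of i0 * FreeGroup.of i1 = FreeGroup.of i1 * FreeGroup.of i0 :=
        hφinj (by rw [_root_.map_mul, _root_.map_mul]; exact h2)
      exact hofnc h3
    set fA : (Fin m → ℤ) →+ (Fin m → ℤ) :=
      AddMonoidHom.mk' (fun a => Multiplicative.toAdd (π₁ (Multiplicative.ofAdd a, 1)))
        (by
          intro a b
          have h0 : ((Multiplicative.ofAdd (a + b), (1 : FreeGroup (Fin n))) : GFab m n)
              = (Multiplicative.ofAdd a, 1) * (Multiplicative.ofAdd b, 1) :=
            Prod.ext (ofAdd_add a b) (one_mul (1 : FreeGroup (Fin n))).symm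
          rw [h0, _root_.map_mul, toAdd_mul]) with hfA
    set Q : Matrix (Fin m) (Fin m) ℤ := Matrix.of (fun i j => fA (Pi.single i 1) j) with hQm
    have hQ : ∀ a : Fin m → ℤ,
        Multiplicative.toAdd (π₁ (Multiplicative.ofAdd a, 1)) = a ᵥ* Q :=
      fun a => MonoAux.addHom_eq_vecMul fA a
    set fB : FreeGroup (Fin n) →* Multiplicative (Fin m → ℤ) :=
      π₁.comp (MonoidHom.inr _ _) with hfB
    set P : Matrix (Fin n) (Fin m) ℤ :=
      Matrix.of (fun j k => Multiplicative.toAdd (fB (FreeGroup.of j)) k) with hPm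
    have hP : ∀ u, Multiplicative.toAdd (fB u) = abVec u ᵥ* P :=
      fun u => MonoAux.freeHom_eq_vecMul fB u
    have hmain : ∀ (a : Fin m → ℤ) (u : FreeGroup (Fin n)),
        Ψ (Multiplicative.ofAdd a, u)
          = (Multiplicative.ofAdd (a ᵥ* Q + abVec u ᵥ* P), φ u) := by
      intro a u
      have hsplit : ((Multiplicative.ofAdd a, u) : GFab m n)
          = (Multiplicative.ofAdd a, 1) * (1, u) :=
        Prod.ext (mul_one _).symm (one_mul u).symm
      have h0 : Ψ (Multiplicative.ofAdd a, u)
          = (π₁ (Multiplicative.ofAdd a, u), π₂ (Multiplicative.ofAdd a, u)) := rfl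
      rw [h0]
      have hfst : π₁ (Multiplicative.ofAdd a, u)
          = Multiplicative.ofAdd (a ᵥ* Q + abVec u ᵥ* P) := by
        rw [hsplit, _root_.map_mul]
        have e1 : π₁ (Multiplicative.ofAdd a, (1 : FreeGroup (Fin n)))
            = Multiplicative.ofAdd (a ᵥ* Q) := by
          rw [← hQ a, ofAdd_toAdd]
        have e2 : π₁ ((1 : Multiplicative (Fin m → ℤ)), u)
            = Multiplicative.ofAdd (abVec u ᵥ* P) := by
          have : π₁ ((1 : Multiplicative (Fin m → ℤ)), u) = fB u := rfl
          rw [this, ← hP u, ofAdd_toAdd]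
        rw [e1, e2, ← ofAdd_add]
      have hsnd : π₂ (Multiplicative.ofAdd a, u) = φ u := by
        rw [hsplit, _root_.map_mul, hc1 a, one_mul]
        rfl
      rw [hfst, hsnd]
    have hdet : Q.det ≠ 0 := by
      intro h0
      obtain ⟨v, hv0, hvQ⟩ := Matrix.exists_vecMul_eq_zero_iff.mpr h0
      have h1 : Ψ (Multiplicative.ofAdd v, 1) = Ψ 1 := by
        rw [hmain v 1, _root_.map_one, MonoAux.abVec_one, hvQ, _root_.map_one]
        simp
      have h2 := congrArg Prod.fst (hinj h1)
      apply hv0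
      simpa using h2
    exact ⟨φ, Q, P, hφinj, hdet, hmain⟩
  · rintro ⟨φ, Q, P, hφ, hdet, hform⟩
    intro g₁ g₂ hg
    obtain ⟨a₁, u₁⟩ := g₁
    obtain ⟨a₂, u₂⟩ := g₂
    have h1 := hform (Multiplicative.toAdd a₁) u₁
    have h2 := hform (Multiplicative.toAdd a₂) u₂
    have hg' : ((Multiplicative.ofAdd (Multiplicative.toAdd a₁ ᵥ* Q + abVec u₁ ᵥ* P), φ u₁)
        : GFab m n)
        = (Multiplicative.ofAdd (Multiplicative.toAdd a₂ ᵥ* Q + abVec u₂ ᵥ* P), φ u₂) := by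
      rw [← h1, ← h2]; exact hg
    have hu : u₁ = u₂ := hφ (congrArg Prod.snd hg')
    subst hu
    have hfst := congrArg (fun g : GFab m n => Multiplicative.toAdd g.1) hg'
    simp only [toAdd_ofAdd] at hfst
    have hvec : Multiplicative.toAdd a₁ ᵥ* Q = Multiplicative.toAdd a₂ ᵥ* Q :=
      add_right_cancel hfst
    have hzero : (Multiplicative.toAdd a₁ - Multiplicative.toAdd a₂) ᵥ* Q = 0 := by
      rw [Matrix.sub_vecMul, hvec, sub_self]
    have hdiff : Multiplicative.toAdd a₁ - Multiplicative.toAdd a₂ = 0 := by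
      by_contra hne
      exact hdet (Matrix.exists_vecMul_eq_zero_iff.mp ⟨_, hne, hzero⟩)
    have ha : a₁ = a₂ := by
      have := sub_eq_zero.mp hdiff
      exact Multiplicative.toAdd.injective this
    rw [ha]
end

section
/- Let m ≥ 1, n ≥ 2 and let Ψ be an endomorphism of G = ℤ^m × F_n. Then Ψ is an automorphism (i.e. bijective) if and only if there exist an automorphism φ of F_n, a matrix Q ∈ GL(m,ℤ) (an m×m integer matrix invertible over ℤ, equivalently with det(Q) = ±1), and an n×m integer matrix P such that Ψ(a,u) = (aQ + ūP, φ(u)) for all (a,u) ∈ G. -/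
open Matrix

section Aux

open FreeGroup

lemma center_triv {n : ℕ} (hn : 2 ≤ n) (w : FreeGroup (Fin n))
    (h : ∀ v : FreeGroup (Fin n), w * v = v * w) : w = 1 := by
  by_contra hw
  have hL : w.toWord ≠ [] := fun he => hw (toWord_eq_nil_iff.mp he)
  obtain ⟨⟨i, b⟩, L', hL'⟩ := List.exists_cons_of_ne_nil hL
  obtain ⟨j, hj⟩ : ∃ j : Fin n, j ≠ i := by
    refine Fintype.exists_ne_of_one_lt_card ?_ i
    simpa using (show 1 < n from hn)
  set L := w.toWord with hLdef
  have hred : reduce L = L := reduce_toWord w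
  have hw1 : w = mk L := (mk_toWord).symm
  -- toWord (of j * w)
  have h1 : (FreeGroup.of j * w).toWord = (j, true) :: L := by
    rw [hw1, FreeGroup.of, mul_mk, toWord_mk]
    rw [show ([(j, true)] ++ L : List (Fin n × Bool)) = (j, true) :: L from rfl]
    rw [reduce.cons, hred, hL']
    simp [hj]
  -- toWord (w * of j)
  have h2 : (w * FreeGroup.of j).toWord
      = invRev (reduce ((j, false) :: invRev L)) := by
    have hrw : w * FreeGroup.of j = ((FreeGroup.of j)⁻¹ * w⁻¹)⁻¹ := by group
    rw [hrw, toWord_inv]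
    congr 1
    rw [hw1, FreeGroup.of, inv_mk, inv_mk, mul_mk, toWord_mk]
    have : invRev [((j : Fin n), true)] ++ invRev L = (j, false) :: invRev L := by
      simp [invRev]
    rw [this]
  have heq : invRev (reduce ((j, false) :: invRev L)) = (j, true) :: L := by
    rw [← h2, ← h1, h (FreeGroup.of j)]
  -- analyze
  obtain ⟨⟨k, c⟩, M, hM⟩ : ∃ x M, invRev L = x :: M := by
    have : invRev L ≠ [] := by
      intro he
      apply hL
      have := congrArg List.length he
      simpa [invRev_length] using this
    obtain ⟨x, M, hM⟩ := List.exists_cons_of_ne_nil this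
    exact ⟨x, M, hM⟩
  have hredI : reduce (invRev L) = invRev L := by rw [reduce_invRev, hred]
  rw [reduce.cons, hredI, hM] at heq
  replace heq : invRev (if (j : Fin n) = k ∧ false = !c then M
      else (j, false) :: (k, c) :: M) = (j, true) :: L := heq
  by_cases hc : j = k ∧ false = !c
  · rw [if_pos hc] at heq
    have hlenM : L.length = M.length + 1 := by
      have := congrArg List.length hM
      simpa [invRev_length] using this
    have h3 := congrArg List.length heq
    simp [invRev_length] at h3
    omega
  · rw [if_neg hc, ← hM] at heq
    have hrw2 : invRev ((j, false) :: invRev L) = L ++ [(j, true)] := by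
      simp [invRev, Function.comp_def]
    rw [hrw2, hL'] at heq
    simp at heq
    exact hj heq.1.1.symm


lemma abVec_mul {n : ℕ} (u v : FreeGroup (Fin n)) :
    abVec (u * v) = abVec u + abVec v := by
  unfold abVec
  rw [_root_.map_mul]
  rfl

lemma abVec_of {n : ℕ} (i : Fin n) : abVec (FreeGroup.of i) = Pi.single i 1 := by
  unfold abVec
  rw [FreeGroup.lift_apply_of]
  rfl

lemma hom_vecMul {m : ℕ} (f : (Fin m → ℤ) →+ (Fin m → ℤ)) (a : Fin m → ℤ) :
    f a = a ᵥ* Matrix.of (fun i => f (Pi.single i 1)) := by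
  have ha : a = ∑ i, a i • Pi.single i (1 : ℤ) := by
    ext j
    simp [Pi.single_apply]
  calc f a = f (∑ i, a i • Pi.single i (1 : ℤ)) := by rw [← ha]
    _ = ∑ i, a i • f (Pi.single i (1 : ℤ)) := by
        rw [map_sum]
        exact Finset.sum_congr rfl fun i _ => map_zsmul f _ _
    _ = a ᵥ* Matrix.of (fun i => f (Pi.single i 1)) := by
        ext j
        simp [Matrix.vecMul, dotProduct, Finset.sum_apply]

end Aux

/-- An endomorphism Ψ of `ℤ^m × F_n` (m ≥ 1, n ≥ 2) is an automorphism (bijective) iff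
it is of type I with φ an automorphism of `F_n` and `Q ∈ GL(m,ℤ)`, i.e. `det Q = ±1`. -/
theorem auto_characterization (m n : ℕ) (hm : 1 ≤ m) (hn : 2 ≤ n)
    (Ψ : GFab m n →* GFab m n) :
    Function.Bijective Ψ ↔
    ∃ (φ : FreeGroup (Fin n) →* FreeGroup (Fin n))
      (Q : Matrix (Fin m) (Fin m) ℤ) (P : Matrix (Fin n) (Fin m) ℤ),
      Function.Bijective φ ∧ (Q.det = 1 ∨ Q.det = -1) ∧
      ∀ (a : Fin m → ℤ) (u : FreeGroup (Fin n)),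
        Ψ (Multiplicative.ofAdd a, u)
          = (Multiplicative.ofAdd (a ᵥ* Q + abVec u ᵥ* P), φ u) := by
  constructor
  · intro hbij
    set e : GFab m n ≃* GFab m n := MulEquiv.ofBijective Ψ hbij with he
    -- elements (a, 1) are central
    have hcent : ∀ (a : Fin m → ℤ) (g : GFab m n),
        (Multiplicative.ofAdd a, (1 : FreeGroup (Fin n))) * g
          = g * (Multiplicative.ofAdd a, 1) := by
      intro a g
      rw [Prod.ext_iff]
      exact ⟨mul_comm _ _, by simp⟩
    -- any surjective endomorphism kills the free part of central elements
    have hsnd : ∀ (F : GFab m n →* GFab m n), Function.Surjective F →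
        ∀ a : Fin m → ℤ, (F (Multiplicative.ofAdd a, 1)).2 = 1 := by
      intro F hF a
      apply center_triv hn
      intro v
      obtain ⟨g, hg⟩ := hF (1, v)
      have h0 : F ((Multiplicative.ofAdd a, 1) * g)
          = F (g * (Multiplicative.ofAdd a, 1)) := by rw [hcent a g]
      rw [_root_.map_mul, _root_.map_mul] at h0
      have h2 := congrArg Prod.snd h0
      simp only [Prod.snd_mul] at h2
      rw [hg] at h2
      exact h2
    -- the additive endomorphism on the abelian part
    have hadd : ∀ (F : GFab m n →* GFab m n) (a b : Fin m → ℤ),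
        Multiplicative.toAdd (F (Multiplicative.ofAdd (a + b), 1)).1
          = Multiplicative.toAdd (F (Multiplicative.ofAdd a, 1)).1
            + Multiplicative.toAdd (F (Multiplicative.ofAdd b, 1)).1 := by
      intro F a b
      have h9 : (Multiplicative.ofAdd (a + b), (1 : FreeGroup (Fin n)))
          = (Multiplicative.ofAdd a, 1) * (Multiplicative.ofAdd b, 1) := by
        rw [Prod.mk_mul_mk, mul_one, ← ofAdd_add]
      rw [h9, _root_.map_mul, Prod.fst_mul, toAdd_mul]
    set A : (Fin m → ℤ) →+ (Fin m → ℤ) :=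
      AddMonoidHom.mk' (fun a => Multiplicative.toAdd (Ψ (Multiplicative.ofAdd a, 1)).1)
        (hadd Ψ) with hAdef
    set Q : Matrix (Fin m) (Fin m) ℤ := Matrix.of (fun i => A (Pi.single i 1)) with hQdef
    have hΨa : ∀ a : Fin m → ℤ,
        Ψ (Multiplicative.ofAdd a, 1) = (Multiplicative.ofAdd (a ᵥ* Q), 1) := by
      intro a
      rw [Prod.ext_iff]
      constructor
      · have h1 : A a = a ᵥ* Q := hom_vecMul A a
        have : (Ψ (Multiplicative.ofAdd a, 1)).1 = Multiplicative.ofAdd (A a) := rfl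
        rw [this, h1]
      · exact hsnd Ψ hbij.2 a
    -- φ and P
    set φ : FreeGroup (Fin n) →* FreeGroup (Fin n) :=
      (MonoidHom.snd _ _).comp (Ψ.comp (MonoidHom.inr _ _)) with hφdef
    set P : Matrix (Fin n) (Fin m) ℤ :=
      Matrix.of (fun i => Multiplicative.toAdd (Ψ (1, FreeGroup.of i)).1) with hPdef
    have hP : ∀ u : FreeGroup (Fin n),
        (Ψ ((1 : Multiplicative (Fin m → ℤ)), u)).1
          = Multiplicative.ofAdd (abVec u ᵥ* P) := by
      have key : (MonoidHom.fst _ _).comp (Ψ.comp (MonoidHom.inr _ _))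
          = MonoidHom.mk' (fun u : FreeGroup (Fin n) =>
              Multiplicative.ofAdd (abVec u ᵥ* P))
            (by
              intro u v
              show Multiplicative.ofAdd (abVec (u * v) ᵥ* P) = _
              rw [abVec_mul, Matrix.add_vecMul, ofAdd_add]) := by
        apply FreeGroup.ext_hom
        intro i
        show (Ψ (1, FreeGroup.of i)).1 = Multiplicative.ofAdd (abVec (FreeGroup.of i) ᵥ* P)
        rw [abVec_of, Matrix.single_one_vecMul]
        rfl
      intro u
      exact DFunLike.congr_fun key u
    -- main formula
    have hmain : ∀ (a : Fin m → ℤ) (u : FreeGroup (Fin n)),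
        Ψ (Multiplicative.ofAdd a, u)
          = (Multiplicative.ofAdd (a ᵥ* Q + abVec u ᵥ* P), φ u) := by
      intro a u
      have hsplit : (Multiplicative.ofAdd a, u)
          = ((Multiplicative.ofAdd a, (1 : FreeGroup (Fin n)))
            * ((1 : Multiplicative (Fin m → ℤ)), u)) := by
        rw [Prod.ext_iff]
        exact ⟨by simp, by simp⟩
      rw [hsplit, _root_.map_mul, hΨa]
      rw [Prod.ext_iff]
      constructor
      · rw [Prod.fst_mul, hP]
        exact (ofAdd_add _ _).symm
      · rw [Prod.snd_mul]
        simp only [hφdef, MonoidHom.comp_apply, MonoidHom.coe_snd, MonoidHom.inr_apply]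
        exact one_mul _
    -- inverse matrix
    set B : (Fin m → ℤ) →+ (Fin m → ℤ) :=
      AddMonoidHom.mk' (fun a =>
        Multiplicative.toAdd (e.symm.toMonoidHom (Multiplicative.ofAdd a, 1)).1)
        (hadd e.symm.toMonoidHom) with hBdef
    set Q' : Matrix (Fin m) (Fin m) ℤ := Matrix.of (fun i => B (Pi.single i 1)) with hQ'def
    have hB : ∀ b : Fin m → ℤ,
        e.symm (Multiplicative.ofAdd b, 1) = (Multiplicative.ofAdd (b ᵥ* Q'), 1) := by
      intro b
      rw [Prod.ext_iff]
      constructor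
      · have h1 : B b = b ᵥ* Q' := hom_vecMul B b
        have h2 : (e.symm (Multiplicative.ofAdd b, 1)).1 = Multiplicative.ofAdd (B b) := rfl
        rw [h2, h1]
      · exact hsnd e.symm.toMonoidHom e.symm.surjective b
    have heΨ : ∀ g : GFab m n, e g = Ψ g := fun g => rfl
    have hQQ' : Q * Q' = 1 := by
      have key : ∀ a : Fin m → ℤ, a ᵥ* (Q * Q') = a := by
        intro a
        have h1 : e.symm (e (Multiplicative.ofAdd a, 1)) = (Multiplicative.ofAdd a, 1) :=
          e.symm_apply_apply _
        rw [heΨ, hΨa, hB] at h1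
        have := congrArg (fun p => Multiplicative.toAdd p.1) h1
        simpa [Matrix.vecMul_vecMul] using this
      ext i j
      have := congrFun (key (Pi.single i 1)) j
      rw [Matrix.single_one_vecMul, Matrix.row_apply] at this
      rw [this, Matrix.one_apply, Pi.single_apply]
      simp [eq_comm]
    have hQ'Q : Q' * Q = 1 := by
      have key : ∀ b : Fin m → ℤ, b ᵥ* (Q' * Q) = b := by
        intro b
        have h1 : e (e.symm (Multiplicative.ofAdd b, 1)) = (Multiplicative.ofAdd b, 1) :=
          e.apply_symm_apply _
        rw [hB, heΨ, hΨa] at h1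
        have := congrArg (fun p => Multiplicative.toAdd p.1) h1
        simpa [Matrix.vecMul_vecMul] using this
      ext i j
      have := congrFun (key (Pi.single i 1)) j
      rw [Matrix.single_one_vecMul, Matrix.row_apply] at this
      rw [this, Matrix.one_apply, Pi.single_apply]
      simp [eq_comm]
    -- determinant
    have hdet : Q.det = 1 ∨ Q.det = -1 := by
      have : IsUnit Q.det := by
        apply IsUnit.of_mul_eq_one Q'.det
        rw [← Matrix.det_mul, hQQ', Matrix.det_one]
      exact Int.isUnit_iff.mp this
    -- φ bijective
    have hφinj : Function.Injective φ := by
      rw [injective_iff_map_eq_one] at *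
      intro u hu
      set a : Fin m → ℤ := (-(abVec u ᵥ* P)) ᵥ* Q' with hadef
      have h1 : Ψ (Multiplicative.ofAdd a, u) = 1 := by
        rw [hmain]
        have : a ᵥ* Q + abVec u ᵥ* P = 0 := by
          rw [hadef, Matrix.vecMul_vecMul, hQ'Q, Matrix.vecMul_one, neg_add_cancel]
        rw [this, hu]
        rfl
      have h2 : (Multiplicative.ofAdd a, u) = (1 : GFab m n) :=
        hbij.1 (h1.trans (map_one Ψ).symm)
      exact congrArg Prod.snd h2
    have hφsurj : Function.Surjective φ := by
      intro v
      obtain ⟨g, hg⟩ := hbij.2 ((1 : Multiplicative (Fin m → ℤ)), v)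
      refine ⟨g.2, ?_⟩
      have h1 := hmain (Multiplicative.toAdd g.1) g.2
      have h2 : (Multiplicative.ofAdd (Multiplicative.toAdd g.1), g.2) = g := by
        simp
      rw [h2, hg] at h1
      exact (congrArg Prod.snd h1).symm
    exact ⟨φ, Q, P, ⟨hφinj, hφsurj⟩, hdet, hmain⟩
  · rintro ⟨φ, Q, P, hφ, hdet, hform⟩
    have hQ : IsUnit Q.det := by rcases hdet with h | h <;> rw [h] <;> simp
    have hQQ : Q * Q⁻¹ = 1 := Matrix.mul_nonsing_inv Q hQ
    have hQ'Q : Q⁻¹ * Q = 1 := Matrix.nonsing_inv_mul Q hQ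
    constructor
    · rintro ⟨x1, x2⟩ ⟨y1, y2⟩ hxy
      have hx := hform (Multiplicative.toAdd x1) x2
      have hy := hform (Multiplicative.toAdd y1) y2
      simp only [ofAdd_toAdd] at hx hy
      rw [hx, hy, Prod.ext_iff] at hxy
      obtain ⟨hxy1, hxy2⟩ := hxy
      have h2 : x2 = y2 := hφ.1 hxy2
      subst h2
      have h1 : Multiplicative.toAdd x1 ᵥ* Q + abVec x2 ᵥ* P
          = Multiplicative.toAdd y1 ᵥ* Q + abVec x2 ᵥ* P := by
        exact Multiplicative.ofAdd.injective hxy1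
      have h3 : Multiplicative.toAdd x1 ᵥ* Q = Multiplicative.toAdd y1 ᵥ* Q :=
        add_right_cancel h1
      have h4 := congrArg (fun v => v ᵥ* Q⁻¹) h3
      simp only [Matrix.vecMul_vecMul, hQQ, Matrix.vecMul_one] at h4
      have h5 : x1 = y1 := by
        have := congrArg Multiplicative.ofAdd h4
        simpa using this
      rw [h5]
    · rintro ⟨y1, y2⟩
      obtain ⟨u, hu⟩ := hφ.2 y2
      refine ⟨(Multiplicative.ofAdd ((Multiplicative.toAdd y1 - abVec u ᵥ* P) ᵥ* Q⁻¹), u), ?_⟩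
      rw [hform, Prod.ext_iff]
      constructor
      · simp only [Matrix.vecMul_vecMul, hQ'Q, Matrix.vecMul_one]
        rw [sub_add_cancel]
        simp
      · exact hu
end

section
/- Let m ≥ 1, n ≥ 2 and let (a,u), (b,v) ∈ G = ℤ^m × F_n. There exists an endomorphism Ψ of G with Ψ(a,u) = (b,v) if and only if the following two conditions both hold: (1) either there exists an endomorphism φ of F_n with φ(u) = v, or there exist w ∈ F_n with w ≠ 1 and w not a proper power, l ∈ ℤ^m with l ≠ 0, and h ∈ ℤ^n with v = w^{a·lᵀ + ū·hᵀ}; and (2) there exist an m×m integer matrix Q and an n×m integer matrix P with aQ + ūP = b. -/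
open Matrix

namespace WH
open FreeGroup

set_option linter.unusedSectionVars false

variable {ι : Type*} [DecidableEq ι]

lemma reduce_cons_cons (x h : ι × Bool) (t : List (ι × Bool))
    (hL : reduce (h :: t) = h :: t) (hx : ¬(x.1 = h.1 ∧ x.2 = !h.2)) :
    reduce (x :: h :: t) = x :: h :: t := by
  rw [reduce.cons, hL]
  simp only [if_neg hx]

lemma reduce_tail (x : ι × Bool) (L : List (ι × Bool)) (h : reduce (x :: L) = x :: L) :
    reduce L = L := by
  have hlen : (reduce L).length ≤ L.length := Red.length_le reduce.red
  rw [reduce.cons] at h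
  cases hr : reduce L with
  | nil =>
    rw [hr] at h
    change [x] = x :: L at h
    have hL : L = [] := by injection h with h1 h2; exact h2.symm
    subst hL; rfl
  | cons hd tl =>
    rw [hr] at h
    change (if x.1 = hd.1 ∧ x.2 = !hd.2 then tl else x :: hd :: tl) = x :: L at h
    split_ifs at h with hcond
    · exfalso
      have h1 : tl.length = L.length + 1 := by
        have := congrArg List.length h
        simpa using this
      have h2 : (hd :: tl).length ≤ L.length := hr ▸ hlen
      simp only [List.length_cons, h1] at h2
      omega
    · rw [List.cons.injEq] at h
      exact h.2


lemma mk_single_true (d : ι) : mk [(d, true)] = of d := rfl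

lemma mk_single_false (d : ι) : mk [(d, false)] = (of d)⁻¹ := by
  have : (of d)⁻¹ = (mk [(d, true)])⁻¹ := rfl
  rw [this, inv_mk]
  simp [invRev]

lemma invRev_cons (x : ι × Bool) (L : List (ι × Bool)) :
    invRev (x :: L) = invRev L ++ [(x.1, !x.2)] := by
  simp [invRev]

lemma peel_head (d : ι) (s : Bool) (T : List (ι × Bool)) (z : FreeGroup ι)
    (hz : z.toWord = (d, s) :: T) :
    z = of d ^ (if s then (1:ℤ) else -1) * mk T ∧ (mk T).toWord = T := by
  have hred : reduce ((d,s) :: T) = (d,s) :: T := by rw [← hz]; exact reduce_toWord z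
  have hT : reduce T = T := reduce_tail _ _ hred
  have hmkT : (mk T).toWord = T := by rw [toWord_mk, hT]
  refine ⟨?_, hmkT⟩
  have h1 : z = mk ((d,s) :: T) := by
    conv_lhs => rw [← mk_toWord (x := z), hz]
  rw [h1, show (d,s) :: T = [(d,s)] ++ T from rfl, ← mul_mk]
  congr 1
  cases s
  · rw [mk_single_false]; norm_num
  · rw [mk_single_true]; norm_num

lemma commute_heads_false (d : ι) (z : FreeGroup ι) (hcom : z * of d = of d * z)
    (c : ι) (s : Bool) (c' : ι) (s' : Bool) (T T' : List (ι × Bool))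
    (hz : z.toWord = (c,s) :: T) (hz' : (z⁻¹).toWord = (c',s') :: T')
    (hc : c ≠ d) (hc' : c' ≠ d) : False := by
  have h1 : (of d * z).toWord = (d, true) :: z.toWord := by
    have he : of d * z = mk ([(d,true)] ++ z.toWord) := by
      rw [← mul_mk, mk_single_true, mk_toWord]
    rw [he, toWord_mk, hz]
    exact reduce_cons_cons _ _ _ (by rw [← hz]; exact reduce_toWord z)
      (by simp only [not_and]; intro h; exact absurd h.symm hc)
  have h2 : ((of d)⁻¹ * z⁻¹).toWord = (d, false) :: (z⁻¹).toWord := by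
    have he : (of d)⁻¹ * z⁻¹ = mk ([(d,false)] ++ (z⁻¹).toWord) := by
      rw [← mul_mk, mk_single_false, mk_toWord]
    rw [he, toWord_mk, hz']
    exact reduce_cons_cons _ _ _ (by rw [← hz']; exact reduce_toWord (z⁻¹))
      (by simp only [not_and]; intro h; exact absurd h.symm hc')
  have h3 : (z * of d).toWord = z.toWord ++ [(d, true)] := by
    have hzd : z * of d = ((of d)⁻¹ * z⁻¹)⁻¹ := by simp
    rw [hzd, toWord_inv, h2, invRev_cons]
    have h4 : invRev ((z⁻¹).toWord) = z.toWord := by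
      have h5 := toWord_inv (z⁻¹)
      rw [inv_inv] at h5
      exact h5.symm
    rw [h4]
    simp
  have heq : z.toWord ++ [(d, true)] = (d, true) :: z.toWord := by
    rw [← h3, ← h1, hcom]
  rw [hz] at heq
  have : (c, s) = (d, true) := by
    have := congrArg (fun l => l.head?) heq
    simpa using this
  exact hc (congrArg Prod.fst this)

lemma commute_of_eq_zpow_aux (d : ι) :
    ∀ (N : ℕ) (z : FreeGroup ι), FreeGroup.norm z ≤ N → z * of d = of d * z → ∃ k : ℤ, z = of d ^ k := by
  intro N
  induction N with
  | zero =>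
    intro z hn _
    exact ⟨0, by rw [_root_.zpow_zero]; exact FreeGroup.norm_eq_zero.mp (Nat.le_zero.mp hn)⟩
  | succ N ih =>
    intro z hn hcom
    cases hw : z.toWord with
    | nil => exact ⟨0, by rw [_root_.zpow_zero]; exact toWord_eq_nil_iff.mp hw⟩
    | cons x T =>
      obtain ⟨c, s⟩ := x
      by_cases hcd : c = d
      · subst hcd
        obtain ⟨hz1, hz2⟩ := peel_head c s T z hw
        set ε : ℤ := if s then (1:ℤ) else -1 with hε
        set z' : FreeGroup ι := mk T with hz'
        have hnorm : FreeGroup.norm z' ≤ N := by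
          have h1 : FreeGroup.norm z = T.length + 1 := by
            rw [show FreeGroup.norm z = z.toWord.length from rfl, hw]; simp
          have h2 : FreeGroup.norm z' = T.length := by
            rw [show FreeGroup.norm z' = z'.toWord.length from rfl, hz2]
          omega
        have hcom' : z' * of c = of c * z' := by
          have e1 : z' = (of c ^ ε)⁻¹ * z := by rw [hz1]; group
          have hC : Commute z (of c) := hcom
          have : Commute z' (of c) := by
            rw [e1]
            exact Commute.mul_left (((Commute.refl (of c)).zpow_left ε).inv_left) hC
          exact this.eq
        obtain ⟨k, hk⟩ := ih z' hnorm hcom'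
        exact ⟨ε + k, by rw [hz1, hk, _root_.zpow_add]⟩
      · cases hw' : (z⁻¹).toWord with
        | nil =>
          have : z = 1 := by
            have := toWord_eq_nil_iff.mp hw'
            rwa [inv_eq_one] at this
          exact ⟨0, by rw [_root_.zpow_zero]; exact this⟩
        | cons y T' =>
          obtain ⟨c', s'⟩ := y
          by_cases hcd' : c' = d
          · subst hcd'
            obtain ⟨hz1, hz2⟩ := peel_head c' s' T' z⁻¹ hw'
            set ε : ℤ := if s' then (1:ℤ) else -1 with hε
            set z' : FreeGroup ι := mk T' with hzp
            have hnorm : FreeGroup.norm z' ≤ N := by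
              have h0 : FreeGroup.norm z⁻¹ = T'.length + 1 := by
                rw [show FreeGroup.norm z⁻¹ = (z⁻¹).toWord.length from rfl, hw']; simp
              have h1 : FreeGroup.norm z⁻¹ = FreeGroup.norm z := norm_inv_eq
              have h2 : FreeGroup.norm z' = T'.length := by
                rw [show FreeGroup.norm z' = z'.toWord.length from rfl, hz2]
              omega
            have hcom' : z' * of c' = of c' * z' := by
              have e1 : z' = (of c' ^ ε)⁻¹ * z⁻¹ := by rw [hz1]; group
              have hC : Commute z (of c') := hcom
              have : Commute z' (of c') := by
                rw [e1]
                exact Commute.mul_left (((Commute.refl (of c')).zpow_left ε).inv_left)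
                  hC.inv_left
              exact this.eq
            obtain ⟨k, hk⟩ := ih z' hnorm hcom'
            refine ⟨-(ε + k), ?_⟩
            have : z⁻¹ = of c' ^ (ε + k) := by rw [hz1, hk, _root_.zpow_add]
            rw [← inv_inv z, this, ← _root_.zpow_neg]
          · exact (commute_heads_false d z hcom c s c' s' T T' hw hw' hcd hcd').elim

lemma commute_of_eq_zpow (d : ι) (z : FreeGroup ι) (hcom : z * of d = of d * z) :
    ∃ k : ℤ, z = of d ^ k :=
  commute_of_eq_zpow_aux d (norm z) z le_rfl hcom

lemma zpow_of_eq_zpow_of (a b : ι) (hab : a ≠ b) (i j : ℤ)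
    (h : of a ^ i = of b ^ j) : j = 0 := by
  let E : FreeGroup ι →* Multiplicative ℤ :=
    FreeGroup.lift fun x => if x = b then Multiplicative.ofAdd (1:ℤ) else 1
  have h1 : E (of a ^ i) = 1 := by
    rw [_root_.map_zpow, FreeGroup.lift_apply_of, if_neg hab, _root_.one_zpow]
  have h2 : E (of b ^ j) = Multiplicative.ofAdd j := by
    rw [_root_.map_zpow, FreeGroup.lift_apply_of, if_pos rfl]
    simp [← ofAdd_zsmul]
  rw [h, h2] at h1
  exact ofAdd_eq_one.mp h1

end WH

namespace WH

lemma of_zpow_eq_one {ι : Type*} (g : ι) (k : ℤ) (h : FreeGroup.of g ^ k = 1) : k = 0 := by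
  classical
  rcases k with n | n
  · rw [Int.ofNat_eq_coe, _root_.zpow_natCast] at h
    have h2 := FreeGroup.norm_of_pow g n
    rw [h, FreeGroup.norm_one] at h2
    simp [← h2]
  · rw [_root_.zpow_negSucc, inv_eq_one] at h
    have h2 := FreeGroup.norm_of_pow g (n+1)
    rw [h, FreeGroup.norm_one] at h2
    omega

lemma central_imp_subsingleton {ι : Type*} (z : FreeGroup ι) (hz : z ≠ 1)
    (hc : ∀ t, z * t = t * z) (a b : ι) : a = b := by
  classical
  by_contra hab
  obtain ⟨i, hi⟩ := commute_of_eq_zpow a z (hc (FreeGroup.of a))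
  obtain ⟨j, hj⟩ := commute_of_eq_zpow b z (hc (FreeGroup.of b))
  have hj0 : j = 0 := zpow_of_eq_zpow_of a b hab i j (by rw [← hi, hj])
  exact hz (by rw [hj, hj0, _root_.zpow_zero])

lemma exists_gen (K : Type*) [Group K] [IsFreeGroup K] (z : K) (hz : z ≠ 1)
    (hcent : ∀ t : K, z * t = t * z) :
    ∃ w : K, (∀ x : K, x ∈ Subgroup.zpowers w) ∧ ∀ k : ℤ, w ^ k = 1 → k = 0 := by
  classical
  obtain ⟨ι, ⟨b⟩⟩ := IsFreeGroup.nonempty_basis (G := K)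
  set e : K ≃* FreeGroup ι := b.repr with he
  set y := e z with hy
  have hy1 : y ≠ 1 := by
    simp only [hy, ne_eq, MulEquiv.map_eq_one_iff]
    exact hz
  have hycent : ∀ t, y * t = t * y := by
    intro t
    have h1 : z * e.symm t = e.symm t * z := hcent _
    have h2 := congrArg e h1
    simpa [_root_.map_mul] using h2
  have hsub : ∀ a b' : ι, a = b' := central_imp_subsingleton y hy1 hycent
  have hne : Nonempty ι := by
    rcases hl : y.toWord with _ | ⟨x, L⟩
    · exact absurd (FreeGroup.toWord_eq_nil_iff.mp hl) hy1
    · exact ⟨x.1⟩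
  obtain ⟨g⟩ := hne
  have hall : ∀ t : FreeGroup ι, t ∈ Subgroup.zpowers (FreeGroup.of g) := by
    intro t
    induction t using FreeGroup.induction_on with
    | C1 => exact Subgroup.one_mem _
    | of x => exact (hsub x g) ▸ Subgroup.mem_zpowers _
    | inv_of x hx => exact Subgroup.inv_mem _ hx
    | mul x y hx hy => exact Subgroup.mul_mem _ hx hy
  refine ⟨e.symm (FreeGroup.of g), ?_, ?_⟩
  · intro x
    obtain ⟨k, hk⟩ := Subgroup.mem_zpowers_iff.mp (hall (e x))
    refine Subgroup.mem_zpowers_iff.mpr ⟨k, ?_⟩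
    rw [← _root_.map_zpow, hk]
    exact e.symm_apply_apply x
  · intro k hk
    have h3 : FreeGroup.of g ^ k = 1 := by
      have h4 := congrArg e hk
      rw [_root_.map_zpow, _root_.map_one, e.apply_symm_apply] at h4
      exact h4
    exact of_zpow_eq_one g k h3

lemma centralizer_structure {ι : Type*} (cc : FreeGroup ι) (hcc : cc ≠ 1) :
    ∃ w : FreeGroup ι, (∀ x, x * cc = cc * x → x ∈ Subgroup.zpowers w) ∧
      cc ∈ Subgroup.zpowers w ∧ ∀ k : ℤ, w ^ k = 1 → k = 0 := by
  set C := Subgroup.centralizer {cc} with hC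
  have hmem : ∀ x : FreeGroup ι, x * cc = cc * x → x ∈ C := by
    intro x hx
    rw [hC, Subgroup.mem_centralizer_iff]
    intro y hy
    rw [Set.mem_singleton_iff.mp hy]
    exact hx.symm
  have hccC : cc ∈ C := hmem cc rfl
  set zc : C := ⟨cc, hccC⟩ with hzc
  have hzc1 : zc ≠ 1 := by
    intro h
    exact hcc (congrArg Subtype.val h)
  have hzcent : ∀ t : C, zc * t = t * zc := by
    intro t
    apply Subtype.ext
    exact Subgroup.mem_centralizer_iff.mp t.2 cc rfl
  obtain ⟨w0, hall, htor⟩ := exists_gen C zc hzc1 hzcent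
  refine ⟨(w0 : FreeGroup ι), ?_, ?_, ?_⟩
  · intro x hx
    obtain ⟨k, hk⟩ := Subgroup.mem_zpowers_iff.mp (hall ⟨x, hmem x hx⟩)
    refine Subgroup.mem_zpowers_iff.mpr ⟨k, ?_⟩
    have := congrArg Subtype.val hk
    simpa using this
  · obtain ⟨k, hk⟩ := Subgroup.mem_zpowers_iff.mp (hall zc)
    refine Subgroup.mem_zpowers_iff.mpr ⟨k, ?_⟩
    have := congrArg Subtype.val hk
    simpa using this
  · intro k hk
    apply htor k
    apply Subtype.ext
    simpa using hk

end WH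


namespace WH

open Matrix


lemma addHom_pi_eq {m : ℕ} {M : Type*} [AddCommGroup M] (A : (Fin m → ℤ) →+ M) (a : Fin m → ℤ) :
    A a = ∑ i, a i • A (Pi.single i (1:ℤ)) := by
  have h0 : A a = A (∑ i, Pi.single i (a i)) := by rw [Finset.univ_sum_single a]
  rw [h0, _root_.map_sum]
  refine Finset.sum_congr rfl fun i _ => ?_
  have h1 : (Pi.single i (a i) : Fin m → ℤ) = a i • (Pi.single i (1:ℤ) : Fin m → ℤ) := by
    rw [← Pi.single_smul, smul_eq_mul, mul_one]
  rw [h1, _root_.map_zsmul]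

lemma freeHom_eq_abVec {n : ℕ} {M : Type*} [AddCommGroup M]
    (B : FreeGroup (Fin n) →* Multiplicative M) (u : FreeGroup (Fin n)) :
    Multiplicative.toAdd (B u) = ∑ j, abVec u j • Multiplicative.toAdd (B (FreeGroup.of j)) := by
  let D : (Fin n → ℤ) →+ M :=
    { toFun := fun x => ∑ j, x j • Multiplicative.toAdd (B (FreeGroup.of j))
      map_zero' := by simp
      map_add' := by intro x y; simp [add_smul, Finset.sum_add_distrib] }
  let B' : FreeGroup (Fin n) →* Multiplicative M :=
    (AddMonoidHom.toMultiplicative D).comp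
      (FreeGroup.lift fun i => Multiplicative.ofAdd (Pi.single i (1:ℤ)))
  have hD : ∀ j, D (Pi.single j (1:ℤ)) = Multiplicative.toAdd (B (FreeGroup.of j)) := by
    intro j
    show (∑ j', (Pi.single j (1:ℤ) : Fin n → ℤ) j' • Multiplicative.toAdd (B (FreeGroup.of j')))
      = Multiplicative.toAdd (B (FreeGroup.of j))
    rw [Finset.sum_eq_single j]
    · simp
    · intro b _ hb
      rw [Pi.single_apply, if_neg hb, zero_smul]
    · intro hj; exact absurd (Finset.mem_univ j) hj
  have hBB' : B = B' := by
    apply FreeGroup.ext_hom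
    intro j
    show B (FreeGroup.of j)
      = (AddMonoidHom.toMultiplicative D)
          ((FreeGroup.lift fun i => Multiplicative.ofAdd (Pi.single i (1:ℤ))) (FreeGroup.of j))
    rw [FreeGroup.lift_apply_of]
    show B (FreeGroup.of j) = Multiplicative.ofAdd (D (Multiplicative.toAdd (Multiplicative.ofAdd (Pi.single j (1:ℤ)))))
    rw [toAdd_ofAdd, hD j, ofAdd_toAdd]
  calc Multiplicative.toAdd (B u) = Multiplicative.toAdd (B' u) := by rw [hBB']
    _ = D (abVec u) := rfl
    _ = ∑ j, abVec u j • Multiplicative.toAdd (B (FreeGroup.of j)) := rfl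


end WH

/-- Whitehead problem characterization for endomorphisms of `ℤ^m × F_n` (m ≥ 1, n ≥ 2):
some endomorphism sends `(a,u)` to `(b,v)` iff (1) either some endomorphism of `F_n`
sends u to v, or `v = w^(a·lᵀ + ū·hᵀ)` for some non-proper-power `w ≠ 1`, `l ≠ 0`
and h; and (2) there exist integer matrices Q, P with `aQ + ūP = b`. -/
theorem whitehead_endo (m n : ℕ) (hm : 1 ≤ m) (hn : 2 ≤ n)
    (a b : Fin m → ℤ) (u v : FreeGroup (Fin n)) :
    (∃ Ψ : GFab m n →* GFab m n,
        Ψ (Multiplicative.ofAdd a, u) = (Multiplicative.ofAdd b, v)) ↔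
    (((∃ φ : FreeGroup (Fin n) →* FreeGroup (Fin n), φ u = v) ∨
      (∃ (w : FreeGroup (Fin n)) (l : Fin m → ℤ) (h : Fin n → ℤ),
        w ≠ 1 ∧ (¬ ∃ (z : FreeGroup (Fin n)) (k : ℕ), 2 ≤ k ∧ w = z ^ k) ∧ l ≠ 0 ∧
        v = w ^ (a ⬝ᵥ l + abVec u ⬝ᵥ h))) ∧
     (∃ (Q : Matrix (Fin m) (Fin m) ℤ) (P : Matrix (Fin n) (Fin m) ℤ),
        a ᵥ* Q + abVec u ᵥ* P = b)) := by
  classical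
  constructor
  · rintro ⟨Ψ, hΨ⟩
    have hsnd : (Ψ (Multiplicative.ofAdd a, u)).2 = v := by rw [hΨ]
    have hsplit : ((Multiplicative.ofAdd a, u) : GFab m n)
        = (Multiplicative.ofAdd a, 1) * (1, u) := by
      simp [Prod.mk_mul_mk]
    constructor
    · -- condition (1)
      set ψ : GFab m n →* FreeGroup (Fin n) := (MonoidHom.snd _ _).comp Ψ with hψdef
      have hv : ψ (Multiplicative.ofAdd a, 1) * ψ (1, u) = v := by
        rw [← _root_.map_mul, ← hsplit]; exact hsnd
      by_cases hc : ∀ i, ψ (Multiplicative.ofAdd (Pi.single i (1:ℤ)), 1) = 1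
      · left
        refine ⟨ψ.comp (MonoidHom.inr _ _), ?_⟩
        have h1 : ψ (Multiplicative.ofAdd a, 1) = 1 := by
          let S : AddSubgroup (Fin m → ℤ) :=
            { carrier := {x | ψ (Multiplicative.ofAdd x, 1) = 1}
              zero_mem' := by
                show ψ (Multiplicative.ofAdd (0 : Fin m → ℤ), 1) = 1
                rw [show ((Multiplicative.ofAdd (0 : Fin m → ℤ), (1 : FreeGroup (Fin n)))
                  : GFab m n) = 1 from rfl, _root_.map_one]
              add_mem' := by
                intro x y hx hy
                show ψ (Multiplicative.ofAdd (x + y), 1) = 1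
                have hxy : ((Multiplicative.ofAdd (x + y), (1 : FreeGroup (Fin n))) : GFab m n)
                    = (Multiplicative.ofAdd x, 1) * (Multiplicative.ofAdd y, 1) := by
                  simp [Prod.mk_mul_mk]
                rw [hxy, _root_.map_mul, hx, hy, one_mul]
              neg_mem' := by
                intro x hx
                show ψ (Multiplicative.ofAdd (-x), 1) = 1
                have hnx : ((Multiplicative.ofAdd (-x), (1 : FreeGroup (Fin n))) : GFab m n)
                    = (Multiplicative.ofAdd x, 1)⁻¹ := by
                  simp [Prod.inv_mk]
                rw [hnx, _root_.map_inv, hx, inv_one] }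
          have hS : ∀ x, x ∈ S := by
            intro x
            have hx : x = ∑ i, (x i) • (Pi.single i (1:ℤ) : Fin m → ℤ) := by
              conv_lhs => rw [← Finset.univ_sum_single x]
              refine Finset.sum_congr rfl fun i _ => ?_
              rw [← Pi.single_smul, smul_eq_mul, mul_one]
            rw [hx]
            exact AddSubgroup.sum_mem S fun i _ => AddSubgroup.zsmul_mem S (hc i) (x i)
          exact hS a
        rw [← hv, h1, one_mul]
        rfl
      · right
        push_neg at hc
        obtain ⟨i0, hi0⟩ := hc
        set cc := ψ (Multiplicative.ofAdd (Pi.single i0 (1:ℤ)), 1) with hccdef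
        have hcom : ∀ g : GFab m n, ψ g * cc = cc * ψ g := by
          intro g
          rw [hccdef, ← _root_.map_mul, ← _root_.map_mul]
          congr 1
          refine Prod.ext ?_ ?_
          · simp [mul_comm]
          · simp
        obtain ⟨w, hwmem, hwcc, hwtor⟩ := WH.centralizer_structure cc hi0
        have hw1 : w ≠ 1 := by
          intro h
          obtain ⟨k, hk⟩ := Subgroup.mem_zpowers_iff.mp hwcc
          rw [h, _root_.one_zpow] at hk
          exact hi0 hk.symm
        have hnp : ¬ ∃ (z : FreeGroup (Fin n)) (k : ℕ), 2 ≤ k ∧ w = z ^ k := by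
          rintro ⟨z, k, hk2, hzk⟩
          have hzcc : z * cc = cc * z := by
            obtain ⟨t, ht⟩ := Subgroup.mem_zpowers_iff.mp hwcc
            rw [← ht, hzk]
            exact (((Commute.refl z).pow_right k).zpow_right t).eq
          obtain ⟨j, hj⟩ := Subgroup.mem_zpowers_iff.mp (hwmem z hzcc)
          have hwk : w ^ (j * (k:ℤ)) = w := by
            rw [_root_.zpow_mul, hj, _root_.zpow_natCast, ← hzk]
          have h0 : w ^ (j * (k:ℤ) - 1) = 1 := by
            rw [_root_.zpow_sub, hwk, _root_.zpow_one]
            simp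
          have hjk := hwtor _ h0
          have hjk1 : j * (k:ℤ) = 1 := by omega
          have hdvd : (k:ℤ) ∣ 1 := ⟨j, by rw [← hjk1]; ring⟩
          have hk1 : (k:ℤ) ≤ 1 := Int.le_of_dvd one_pos hdvd
          omega
        set e := zpowersHom (FreeGroup (Fin n)) w with hedef
        have hinj : Function.Injective e := by
          intro x y hxy
          have h1 : w ^ (Multiplicative.toAdd x) = w ^ (Multiplicative.toAdd y) := hxy
          have h2 : w ^ (Multiplicative.toAdd x - Multiplicative.toAdd y) = 1 := by
            rw [_root_.zpow_sub, h1]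
            simp
          have h3 := hwtor _ h2
          have h4 : Multiplicative.toAdd x = Multiplicative.toAdd y := by omega
          exact Multiplicative.toAdd.injective h4
        have hrange : ∀ g : GFab m n, ψ g ∈ e.range := by
          intro g
          obtain ⟨t, ht⟩ := Subgroup.mem_zpowers_iff.mp (hwmem (ψ g) (hcom g))
          exact ⟨Multiplicative.ofAdd t, ht⟩
        set χ : GFab m n →* Multiplicative ℤ :=
          ((MonoidHom.ofInjective hinj).symm.toMonoidHom).comp
            (ψ.codRestrict e.range hrange) with hχdef
        have hkey : ∀ g : GFab m n, w ^ (Multiplicative.toAdd (χ g)) = ψ g := by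
          intro g
          exact MonoidHom.apply_ofInjective_symm hinj (ψ.codRestrict e.range hrange g)
        refine ⟨w, fun i => Multiplicative.toAdd (χ (Multiplicative.ofAdd (Pi.single i (1:ℤ)), 1)),
          fun j => Multiplicative.toAdd (χ (1, FreeGroup.of j)), hw1, hnp, ?_, ?_⟩
        · intro h0
          apply hi0
          have hz : Multiplicative.toAdd (χ (Multiplicative.ofAdd (Pi.single i0 (1:ℤ)), 1)) = 0 :=
            congrFun h0 i0
          rw [hccdef, ← hkey (Multiplicative.ofAdd (Pi.single i0 (1:ℤ)), 1), hz, _root_.zpow_zero]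
        · let A : (Fin m → ℤ) →+ ℤ :=
            { toFun := fun x => Multiplicative.toAdd (χ (Multiplicative.ofAdd x, 1))
              map_zero' := by
                show Multiplicative.toAdd (χ (Multiplicative.ofAdd (0 : Fin m → ℤ), 1)) = 0
                rw [show ((Multiplicative.ofAdd (0 : Fin m → ℤ), (1 : FreeGroup (Fin n)))
                  : GFab m n) = 1 from rfl, _root_.map_one]
                rfl
              map_add' := by
                intro x y
                have hxy : ((Multiplicative.ofAdd (x + y), (1 : FreeGroup (Fin n))) : GFab m n)
                    = (Multiplicative.ofAdd x, 1) * (Multiplicative.ofAdd y, 1) := by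
                  simp [Prod.mk_mul_mk]
                show Multiplicative.toAdd (χ (Multiplicative.ofAdd (x+y), 1)) = _
                rw [hxy, _root_.map_mul]
                rfl }
          have hA : A a = a ⬝ᵥ (fun i => Multiplicative.toAdd (χ (Multiplicative.ofAdd (Pi.single i (1:ℤ)), 1))) := by
            rw [WH.addHom_pi_eq A a]
            simp only [dotProduct, smul_eq_mul]
            rfl
          let Bχ : FreeGroup (Fin n) →* Multiplicative ℤ := χ.comp (MonoidHom.inr _ _)
          have hB : Multiplicative.toAdd (Bχ u)
              = abVec u ⬝ᵥ (fun j => Multiplicative.toAdd (χ (1, FreeGroup.of j))) := by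
            rw [WH.freeHom_eq_abVec Bχ u]
            simp only [dotProduct, smul_eq_mul]
            rfl
          have hv2 : v = w ^ (Multiplicative.toAdd (χ (Multiplicative.ofAdd a, u))) := by
            rw [hkey]
            exact hsnd.symm
          rw [hv2]
          congr 1
          have hsplit2 : χ (Multiplicative.ofAdd a, u)
              = χ (Multiplicative.ofAdd a, 1) * χ (1, u) := by
            rw [← _root_.map_mul, ← hsplit]
          rw [hsplit2, toAdd_mul]
          exact congrArg₂ (· + ·) hA hB
    · -- condition (2)
      set ψ1 : GFab m n →* Multiplicative (Fin m → ℤ) := (MonoidHom.fst _ _).comp Ψ with hψ1def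
      let A : (Fin m → ℤ) →+ (Fin m → ℤ) :=
        { toFun := fun x => Multiplicative.toAdd (ψ1 (Multiplicative.ofAdd x, 1))
          map_zero' := by
            show Multiplicative.toAdd (ψ1 (Multiplicative.ofAdd (0 : Fin m → ℤ), 1)) = 0
            rw [show ((Multiplicative.ofAdd (0 : Fin m → ℤ), (1 : FreeGroup (Fin n)))
              : GFab m n) = 1 from rfl, _root_.map_one]
            rfl
          map_add' := by
            intro x y
            have hxy : ((Multiplicative.ofAdd (x + y), (1 : FreeGroup (Fin n))) : GFab m n)
                = (Multiplicative.ofAdd x, 1) * (Multiplicative.ofAdd y, 1) := by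
              simp [Prod.mk_mul_mk]
            show Multiplicative.toAdd (ψ1 (Multiplicative.ofAdd (x+y), 1)) = _
            rw [hxy, _root_.map_mul]
            rfl }
      let Bm : FreeGroup (Fin n) →* Multiplicative (Fin m → ℤ) := ψ1.comp (MonoidHom.inr _ _)
      refine ⟨Matrix.of (fun i j => A (Pi.single i (1:ℤ)) j),
        Matrix.of (fun j i => Multiplicative.toAdd (Bm (FreeGroup.of j)) i), ?_⟩
      have hb : b = Multiplicative.toAdd (ψ1 (Multiplicative.ofAdd a, u)) := by
        rw [show ψ1 (Multiplicative.ofAdd a, u) = (Ψ (Multiplicative.ofAdd a, u)).1 from rfl, hΨ]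
        rfl
      have hsplit3 : ψ1 (Multiplicative.ofAdd a, u)
          = ψ1 (Multiplicative.ofAdd a, 1) * ψ1 (1, u) := by
        rw [← _root_.map_mul, ← hsplit]
      symm
      rw [hb, hsplit3, toAdd_mul]
      congr 1
      · rw [show Multiplicative.toAdd (ψ1 (Multiplicative.ofAdd a, 1)) = A a from rfl,
          WH.addHom_pi_eq A a]
        funext j
        simp [Matrix.vecMul, dotProduct, Finset.sum_apply, Pi.smul_apply, smul_eq_mul]
      · rw [show ψ1 (1, u) = Bm u from rfl, WH.freeHom_eq_abVec Bm u]
        funext j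
        simp [Matrix.vecMul, dotProduct, Finset.sum_apply, Pi.smul_apply, smul_eq_mul]
  · rintro ⟨h1, Q, P, hQP⟩
    let abH : FreeGroup (Fin n) →* Multiplicative (Fin n → ℤ) :=
      FreeGroup.lift fun i => Multiplicative.ofAdd (Pi.single i (1 : ℤ))
    let QH : (Fin m → ℤ) →+ (Fin m → ℤ) :=
      { toFun := fun x => x ᵥ* Q
        map_zero' := Matrix.zero_vecMul Q
        map_add' := fun x y => Matrix.add_vecMul Q x y }
    let PH : (Fin n → ℤ) →+ (Fin m → ℤ) :=
      { toFun := fun x => x ᵥ* P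
        map_zero' := Matrix.zero_vecMul P
        map_add' := fun x y => Matrix.add_vecMul P x y }
    let Ψ₁ : GFab m n →* Multiplicative (Fin m → ℤ) :=
      ((AddMonoidHom.toMultiplicative QH).comp (MonoidHom.fst _ _)) *
        (((AddMonoidHom.toMultiplicative PH).comp abH).comp (MonoidHom.snd _ _))
    have hΨ₁ : Ψ₁ (Multiplicative.ofAdd a, u) = Multiplicative.ofAdd b := by
      show Multiplicative.ofAdd (QH a) * Multiplicative.ofAdd (PH (abVec u))
        = Multiplicative.ofAdd b
      rw [← ofAdd_add]
      exact congrArg Multiplicative.ofAdd hQP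
    rcases h1 with ⟨φ, hφ⟩ | ⟨w, l, hh, hw1, hnp, hl, hv⟩
    · refine ⟨Ψ₁.prod (φ.comp (MonoidHom.snd _ _)), ?_⟩
      rw [MonoidHom.prod_apply]
      exact Prod.ext hΨ₁ hφ
    · let lH : (Fin m → ℤ) →+ ℤ :=
        { toFun := fun x => x ⬝ᵥ l
          map_zero' := zero_dotProduct l
          map_add' := fun x y => add_dotProduct x y l }
      let hnH : (Fin n → ℤ) →+ ℤ :=
        { toFun := fun x => x ⬝ᵥ hh
          map_zero' := zero_dotProduct hh
          map_add' := fun x y => add_dotProduct x y hh }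
      let χ : GFab m n →* Multiplicative ℤ :=
        ((AddMonoidHom.toMultiplicative lH).comp (MonoidHom.fst _ _)) *
          (((AddMonoidHom.toMultiplicative hnH).comp abH).comp (MonoidHom.snd _ _))
      refine ⟨Ψ₁.prod ((zpowersHom _ w).comp χ), ?_⟩
      rw [MonoidHom.prod_apply]
      refine Prod.ext hΨ₁ ?_
      show zpowersHom _ w (χ (Multiplicative.ofAdd a, u)) = v
      have hχv : χ (Multiplicative.ofAdd a, u)
          = Multiplicative.ofAdd (a ⬝ᵥ l + abVec u ⬝ᵥ hh) := by
        show Multiplicative.ofAdd (lH a) * Multiplicative.ofAdd (hnH (abVec u)) = _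
        rw [← ofAdd_add]
        rfl
      rw [hχv, zpowersHom_apply, toAdd_ofAdd]
      exact hv.symm
end

section
/- Let a ∈ ℤ^m and u ∈ ℤ^n be nonzero row vectors, let b ∈ ℤ^m, and set α = gcd of the entries of a and μ = gcd of the entries of u. Then there exist an m×m integer matrix Q and an n×m integer matrix P with aQ + uP = b if and only if there exist x, y ∈ ℤ^m with αx + μy = b. -/
open Matrix

lemma finset_gcd_bezout {ι : Type*} [DecidableEq ι] (s : Finset ι) (f : ι → ℤ) :
    ∃ c : ι → ℤ, ∑ i ∈ s, f i * c i = s.gcd f := by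
  induction s using Finset.induction_on with
  | empty => exact ⟨0, by simp⟩
  | @insert i s hins ih =>
    obtain ⟨c, hc⟩ := ih
    refine ⟨fun j => if j = i then Int.gcdA (f i) (s.gcd f)
      else Int.gcdB (f i) (s.gcd f) * c j, ?_⟩
    rw [Finset.sum_insert hins, Finset.gcd_insert]
    have : ∀ j ∈ s, f j * (if j = i then Int.gcdA (f i) (s.gcd f)
        else Int.gcdB (f i) (s.gcd f) * c j)
        = Int.gcdB (f i) (s.gcd f) * (f j * c j) := by
      intro j hj
      rw [if_neg (by rintro rfl; exact hins hj)]; ring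
    rw [Finset.sum_congr rfl this, ← Finset.mul_sum, hc]
    simp only [if_pos rfl, if_true]
    rw [mul_comm ((f i).gcdB (s.gcd f)), ← Int.gcd_eq_gcd_ab, Int.coe_gcd]

/-- For nonzero `a ∈ ℤ^m`, `u ∈ ℤ^n` and `b ∈ ℤ^m`, with `α = gcd(a)` and `μ = gcd(u)`:
there exist integer matrices Q (m×m) and P (n×m) with `aQ + uP = b` iff the system
`αx + μy = b` has an integer solution. -/
theorem matrix_eq_iff_gcd_system (m n : ℕ) (a : Fin m → ℤ) (u : Fin n → ℤ)
    (ha : a ≠ 0) (hu : u ≠ 0) (b : Fin m → ℤ) :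
    (∃ (Q : Matrix (Fin m) (Fin m) ℤ) (P : Matrix (Fin n) (Fin m) ℤ),
        a ᵥ* Q + u ᵥ* P = b) ↔
    (∃ x y : Fin m → ℤ, (Finset.univ.gcd a) • x + (Finset.univ.gcd u) • y = b) := by
  set α := Finset.univ.gcd a
  set μ := Finset.univ.gcd u
  constructor
  · rintro ⟨Q, P, hQP⟩
    refine ⟨fun j => ∑ i, (a i / α) * Q i j, fun j => ∑ i, (u i / μ) * P i j, ?_⟩
    funext j
    have h1 : α * ∑ i, (a i / α) * Q i j = ∑ i, a i * Q i j := by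
      rw [Finset.mul_sum]
      refine Finset.sum_congr rfl fun i _ => ?_
      rw [← mul_assoc, Int.mul_ediv_cancel' (Finset.gcd_dvd (Finset.mem_univ i))]
    have h2 : μ * ∑ i, (u i / μ) * P i j = ∑ i, u i * P i j := by
      rw [Finset.mul_sum]
      refine Finset.sum_congr rfl fun i _ => ?_
      rw [← mul_assoc, Int.mul_ediv_cancel' (Finset.gcd_dvd (Finset.mem_univ i))]
    have := congrFun hQP j
    simp only [Pi.add_apply, vecMul, dotProduct] at this
    simpa [Pi.add_apply, Pi.smul_apply, smul_eq_mul, h1, h2] using this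
  · rintro ⟨x, y, hxy⟩
    obtain ⟨c, hc⟩ := finset_gcd_bezout Finset.univ a
    obtain ⟨d, hd⟩ := finset_gcd_bezout Finset.univ u
    refine ⟨Matrix.of fun i j => c i * x j, Matrix.of fun i j => d i * y j, ?_⟩
    funext j
    have := congrFun hxy j
    simp only [Pi.add_apply, Pi.smul_apply, smul_eq_mul] at this
    simp only [Pi.add_apply, vecMul, dotProduct, Matrix.of_apply]
    rw [← this]
    congr 1
    · rw [show α = ∑ i, a i * c i from hc.symm, Finset.sum_mul]; exact Finset.sum_congr rfl fun i _ => by ring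
    · rw [show μ = ∑ i, u i * d i from hd.symm, Finset.sum_mul]; exact Finset.sum_congr rfl fun i _ => by ring
end

section
/- Let a ∈ ℤ^m and u ∈ ℤ^n be nonzero row vectors, let b ∈ ℤ^m, and set α = gcd of the entries of a and μ = gcd of the entries of u. Then there exist a matrix Q ∈ GL(m,ℤ) and an n×m integer matrix P with aQ + uP = b if and only if there exist x, y ∈ ℤ^m with gcd(x₁,…,x_m) = 1 and αx + μy = b. -/
open Matrix

/-- Bezout for Finset.gcd over ℤ. -/
lemma exists_sum_eq_gcd {ι : Type*} [DecidableEq ι] (s : Finset ι) (f : ι → ℤ) :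
    ∃ c : ι → ℤ, ∑ i ∈ s, c i * f i = s.gcd f := by
  induction s using Finset.induction_on with
  | empty => exact ⟨0, by simp⟩
  | @insert i s hi ih =>
    obtain ⟨c, hc⟩ := ih
    refine ⟨fun j => if j = i then (f i).gcdA (s.gcd f)
      else (f i).gcdB (s.gcd f) * c j, ?_⟩
    rw [Finset.sum_insert hi, Finset.gcd_insert, ← Int.coe_gcd, Int.gcd_eq_gcd_ab]
    have : ∑ j ∈ s, (if j = i then (f i).gcdA (s.gcd f)
        else (f i).gcdB (s.gcd f) * c j) * f j
        = (f i).gcdB (s.gcd f) * ∑ j ∈ s, c j * f j := by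
      rw [Finset.mul_sum]
      refine Finset.sum_congr rfl fun j hj => ?_
      rw [if_neg (by rintro rfl; exact hi hj)]; ring
    rw [this, hc]
    beta_reduce
    rw [if_pos rfl]; ring

lemma int_gcd_eq_one_of_dvd_one {ι : Type*} {s : Finset ι} {f : ι → ℤ}
    (h : s.gcd f ∣ 1) : s.gcd f = 1 := by
  rcases Int.isUnit_iff.mp (isUnit_of_dvd_one h) with h1 | h1
  · exact h1
  · have := Finset.normalize_gcd (s := s) (f := f)
    rw [h1] at this
    exact absurd this (by decide)

/-- Pi.single i₀ 1 ᵥ* M = row i₀ of M. -/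
lemma single_vecMul' {m : ℕ} (M : Matrix (Fin m) (Fin m) ℤ) (i₀ : Fin m) :
    (Pi.single i₀ 1 : Fin m → ℤ) ᵥ* M = M i₀ := by
  funext j
  simp [vecMul, dotProduct, Pi.single_apply, Finset.sum_ite_eq']

/-- A primitive vector is a row of a unimodular matrix. -/
lemma exists_unimodular_row {m : ℕ} (hm : 0 < m) (v : Fin m → ℤ)
    (hv : Finset.univ.gcd v = 1) :
    ∃ M : Matrix (Fin m) (Fin m) ℤ, IsUnit M.det ∧ M ⟨0, hm⟩ = v := by
  obtain ⟨c, hc⟩ := exists_sum_eq_gcd Finset.univ v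
  rw [hv] at hc
  -- the linear functional
  let φ : (Fin m → ℤ) →ₗ[ℤ] ℤ :=
    { toFun := fun w => ∑ i, c i * w i
      map_add' := fun w₁ w₂ => by
        simp [mul_add, Finset.sum_add_distrib]
      map_smul' := fun r w => by
        simp [Finset.mul_sum]; ring_nf; simp [mul_comm, mul_left_comm] }
  have hφv : φ v = 1 := hc
  set K := LinearMap.ker φ with hK
  let bK0 := Module.Free.chooseBasis ℤ K
  let bK := bK0.reindex (Fintype.equivFin _)
  have hli : ∀ (r : ℤ), ∀ x ∈ K, r • v + x = 0 → r = 0 := by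
    intro r x hx hrx
    have : φ (r • v + x) = 0 := by rw [hrx]; simp
    rw [map_add, LinearMap.map_smul, hφv, LinearMap.mem_ker.mp hx] at this
    simpa using this
  have hsp : ∀ z : (Fin m → ℤ), ∃ r : ℤ, z + r • v ∈ K := by
    intro z
    refine ⟨-φ z, ?_⟩
    rw [LinearMap.mem_ker, map_add, LinearMap.map_smul, hφv]
    simp
  let b : Module.Basis (Fin (_ + 1)) ℤ (Fin m → ℤ) := Module.Basis.mkFinCons v bK hli hsp
  let e0 := b.indexEquiv (Pi.basisFun ℤ (Fin m))
  let e := e0.trans (Equiv.swap (e0 0) ⟨0, hm⟩)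
  have he : e 0 = ⟨0, hm⟩ := by simp [e]
  let b' : Module.Basis (Fin m) ℤ (Fin m → ℤ) := b.reindex e
  have hb'0 : b' ⟨0, hm⟩ = v := by
    rw [← he]
    simp only [b', Module.Basis.reindex_apply, Equiv.symm_apply_apply]
    rw [Module.Basis.coe_mkFinCons]
    rfl
  let A := (Pi.basisFun ℤ (Fin m)).toMatrix ⇑b'
  refine ⟨Aᵀ, ?_, ?_⟩
  · rw [Matrix.det_transpose]
    have h1 := Module.Basis.toMatrix_mul_toMatrix_flip (Pi.basisFun ℤ (Fin m)) b'
    have := congrArg Matrix.det h1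
    rw [Matrix.det_mul, Matrix.det_one] at this
    exact IsUnit.of_mul_eq_one _ this
  · funext j
    have : A j ⟨0, hm⟩ = b' ⟨0, hm⟩ j := by
      simp [A, Module.Basis.toMatrix_apply]
    rw [Matrix.transpose_apply, this, hb'0]

/-- For nonzero `a ∈ ℤ^m`, `u ∈ ℤ^n` and `b ∈ ℤ^m`, with `α = gcd(a)` and `μ = gcd(u)`:
there exist `Q ∈ GL(m,ℤ)` and P (n×m) with `aQ + uP = b` iff the system `αx + μy = b`
has an integer solution with `gcd(x₁,…,x_m) = 1`. -/
theorem matrix_eq_iff_gcd_system_aut (m n : ℕ) (a : Fin m → ℤ) (u : Fin n → ℤ)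
    (ha : a ≠ 0) (hu : u ≠ 0) (b : Fin m → ℤ) :
    (∃ (Q : Matrix (Fin m) (Fin m) ℤ) (P : Matrix (Fin n) (Fin m) ℤ),
        (Q.det = 1 ∨ Q.det = -1) ∧ a ᵥ* Q + u ᵥ* P = b) ↔
    (∃ x y : Fin m → ℤ, Finset.univ.gcd x = 1 ∧
        (Finset.univ.gcd a) • x + (Finset.univ.gcd u) • y = b) := by
  obtain ⟨ia, hia⟩ := Function.ne_iff.mp ha
  obtain ⟨iu, hiu⟩ := Function.ne_iff.mp hu
  have hma : (Finset.univ : Finset (Fin m)).Nonempty := ⟨ia, Finset.mem_univ _⟩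
  have hnu : (Finset.univ : Finset (Fin n)).Nonempty := ⟨iu, Finset.mem_univ _⟩
  obtain ⟨g, hg, hg1⟩ := Finset.extract_gcd a hma
  obtain ⟨h, hh, hh1⟩ := Finset.extract_gcd u hnu
  simp only [Finset.mem_univ, forall_const] at hg hh
  set α := Finset.univ.gcd a with hα
  set μ := Finset.univ.gcd u with hμ
  constructor
  · rintro ⟨Q, P, hdet, heq⟩
    refine ⟨g ᵥ* Q, h ᵥ* P, ?_, ?_⟩
    · -- gcd of g ᵥ* Q is 1
      set R := Q.det • Q.adjugate with hR
      have hQR : Q * R = 1 := by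
        rw [hR, Matrix.mul_smul, Matrix.mul_adjugate, smul_smul]
        rcases hdet with h1 | h1 <;> rw [h1] <;> norm_num
      have hback : (g ᵥ* Q) ᵥ* R = g := by
        rw [Matrix.vecMul_vecMul, hQR, Matrix.vecMul_one]
      apply int_gcd_eq_one_of_dvd_one
      rw [← hg1]
      apply Finset.dvd_gcd
      intro i _
      have hgi : g i = ∑ j, (g ᵥ* Q) j * R j i := by
        conv_lhs => rw [← congrFun hback i]
        simp [vecMul, dotProduct]
      rw [hgi]
      apply Finset.dvd_sum
      intro j _
      exact Dvd.dvd.mul_right (Finset.gcd_dvd (Finset.mem_univ j)) _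
    · funext j
      have := congrFun heq j
      simp only [Pi.add_apply, Pi.smul_apply, smul_eq_mul, vecMul, dotProduct] at this ⊢
      rw [Finset.mul_sum, Finset.mul_sum]
      rw [← this]
      congr 1
      · exact Finset.sum_congr rfl fun i _ => by rw [hg i]; ring
      · exact Finset.sum_congr rfl fun i _ => by rw [hh i]; ring
  · rintro ⟨x, y, hx1, heq⟩
    have hm : 0 < m := ia.pos
    obtain ⟨M₁, hM₁u, hM₁r⟩ := exists_unimodular_row hm g hg1
    obtain ⟨M₂, hM₂u, hM₂r⟩ := exists_unimodular_row hm x hx1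
    set R₁ := M₁.det • M₁.adjugate with hR₁
    have hMR : M₁ * R₁ = 1 := by
      rw [hR₁, Matrix.mul_smul, Matrix.mul_adjugate, smul_smul]
      rcases Int.isUnit_iff.mp hM₁u with h1 | h1 <;> rw [h1] <;> norm_num
    have hR₁u : IsUnit R₁.det := by
      have := congrArg Matrix.det hMR
      rw [Matrix.det_mul, Matrix.det_one] at this
      exact IsUnit.of_mul_eq_one _ ((mul_comm _ _).trans this)
    obtain ⟨c, hc⟩ := exists_sum_eq_gcd Finset.univ u
    refine ⟨R₁ * M₂, Matrix.of (fun j i => c j * y i), ?_, ?_⟩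
    · rw [Matrix.det_mul]
      exact Int.isUnit_iff.mp ((hR₁u.mul hM₂u))
    · have key : g ᵥ* (R₁ * M₂) = x := by
        rw [← Matrix.vecMul_vecMul]
        have h1 : g ᵥ* R₁ = Pi.single ⟨0, hm⟩ 1 := by
          have : g = (Pi.single ⟨0, hm⟩ 1 : Fin m → ℤ) ᵥ* M₁ := by
            rw [single_vecMul', hM₁r]
          rw [this, Matrix.vecMul_vecMul, hMR, Matrix.vecMul_one]
        rw [h1, single_vecMul', hM₂r]
      funext j
      have hb := congrFun heq j
      simp only [Pi.add_apply, Pi.smul_apply, smul_eq_mul] at hb ⊢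
      rw [← hb]
      congr 1
      · have : (a ᵥ* (R₁ * M₂)) j = α * (g ᵥ* (R₁ * M₂)) j := by
          simp only [vecMul, dotProduct, Finset.mul_sum]
          exact Finset.sum_congr rfl fun i _ => by rw [hg i]; ring
        rw [this, key]
      · simp only [vecMul, dotProduct, Matrix.of_apply]
        have : ∑ i, u i * (c i * y j) = (∑ i, c i * u i) * y j := by
          rw [Finset.sum_mul]
          exact Finset.sum_congr rfl fun i _ => by ring
        rw [this, hc]
end
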